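/- arXiv:1902.02995 — 7 statements merged into one kernel-verified Lean document; each statement's English description precedes it below -/
import Mathlib

section
/- For all positive integers m and n, the integral over [0,1] of β(mx)·β(nx) dx equals gcd(m,n)²/(12·m·n), where β(t) = t - ⌊t⌋ - 1/2. -/
open MeasureTheory Finset intervalIntegral

noncomputable def beta (t : ℝ) : ℝ := t - ⌊t⌋ - 1/2

lemma beta_eq (t : ℝ) : beta t = Int.fract t - 1/2 := by
  unfold beta Int.fract; ring

lemma beta_abs_le (t : ℝ) : |beta t| ≤ 1 := by
  rw [beta_eq, abs_le]
  have h1 := Int.fract_nonneg t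
  have h2 := Int.fract_lt_one t
  constructor <;> linarith

lemma beta_measurable : Measurable beta := by
  have : Measurable fun t : ℝ => Int.fract t - 1/2 :=
    (measurable_fract).sub measurable_const
  simpa [funext beta_eq] using this

lemma beta_ii (m n : ℕ) (a b : ℝ) :
    IntervalIntegrable (fun x => beta (m*x) * beta (n*x)) volume a b := by
  apply IntervalIntegrable.mono_fun' (g := fun _ => (1:ℝ)) (intervalIntegrable_const)
  · exact ((beta_measurable.comp (measurable_const_mul _)).mul
      (beta_measurable.comp (measurable_const_mul _))).aestronglyMeasurable
  · refine Filter.Eventually.of_forall fun x => ?_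
    calc |beta (↑m*x) * beta (↑n*x)| = |beta (↑m*x)| * |beta (↑n*x)| := abs_mul _ _
    _ ≤ 1 * 1 := mul_le_mul (beta_abs_le _) (beta_abs_le _) (abs_nonneg _) zero_le_one
    _ = 1 := by ring


lemma floor_on_piece (m n : ℕ) (hm : 0 < m) (hn : 0 < n) (i : ℕ) (x : ℝ)
    (hx : x ∈ Set.Ioo ((i:ℝ)/(m*n)) (((i:ℝ)+1)/(m*n))) :
    ⌊(m:ℝ)*x⌋ = (i / n : ℕ) := by
  have hmR : (0:ℝ) < m := by exact_mod_cast hm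
  have hnR : (0:ℝ) < n := by exact_mod_cast hn
  obtain ⟨hx1, hx2⟩ := hx
  rw [Int.floor_eq_iff]
  constructor
  · push_cast
    calc ((i/n : ℕ):ℝ) ≤ (i:ℝ)/n := Nat.cast_div_le
    _ = (m:ℝ) * ((i:ℝ)/(m*n)) := by field_simp
    _ ≤ (m:ℝ) * x := by nlinarith
  · push_cast
    have key : (i:ℝ) + 1 ≤ n * ((i/n : ℕ):ℝ) + n := by
      have : i < n * (i/n) + n := by
        have := Nat.div_add_mod i n
        have := Nat.mod_lt i hn
        omega
      exact_mod_cast this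
    calc (m:ℝ) * x < (m:ℝ) * (((i:ℝ)+1)/(m*n)) := by nlinarith
    _ = ((i:ℝ)+1)/n := by field_simp
    _ ≤ ((i/n:ℕ):ℝ) + 1 := by rw [div_le_iff₀ hnR]; nlinarith

lemma poly_integral (c d a b : ℝ) (m n : ℕ) :
    ∫ x in a..b, ((m:ℝ)*x - c - 1/2) * ((n:ℝ)*x - d - 1/2)
      = ((m:ℝ)*(n:ℝ)/3*b^3 - ((m:ℝ)*(d+1/2)+(n:ℝ)*(c+1/2))/2*b^2 + (c+1/2)*(d+1/2)*b)
      - ((m:ℝ)*(n:ℝ)/3*a^3 - ((m:ℝ)*(d+1/2)+(n:ℝ)*(c+1/2))/2*a^2 + (c+1/2)*(d+1/2)*a) := by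
  have h : ∀ x ∈ Set.uIcc a b, HasDerivAt
      (fun x => (m:ℝ)*(n:ℝ)/3*x^3 - ((m:ℝ)*(d+1/2)+(n:ℝ)*(c+1/2))/2*x^2 + (c+1/2)*(d+1/2)*x)
      (((m:ℝ)*x - c - 1/2) * ((n:ℝ)*x - d - 1/2)) x := by
    intro x _
    have h1 := ((hasDerivAt_pow 3 x).const_mul ((m:ℝ)*(n:ℝ)/3))
    have h2 := ((hasDerivAt_pow 2 x).const_mul (((m:ℝ)*(d+1/2)+(n:ℝ)*(c+1/2))/2))
    have h3 := (hasDerivAt_id x).const_mul ((c+1/2)*(d+1/2))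
    exact ((h1.sub h2).add h3).congr_deriv (by push_cast; ring)
  exact integral_eq_sub_of_hasDerivAt h (by apply Continuous.intervalIntegrable; continuity)

lemma piece (m n : ℕ) (hm : 0 < m) (hn : 0 < n) (i : ℕ) :
    ∫ x in ((i:ℝ)/(m*n))..(((i:ℝ)+1)/(m*n)), beta (↑m*x) * beta (↑n*x)
      = (1/((m:ℝ)*n)) * ( (((i % n : ℕ):ℝ)/n - 1/2) * (((i % m : ℕ):ℝ)/m - 1/2)
          + (((i % n : ℕ):ℝ)/n - 1/2)/(2*m) + (((i % m : ℕ):ℝ)/m - 1/2)/(2*n)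
          + 1/(3*(m:ℝ)*n) ) := by
  have hmR : (0:ℝ) < m := by exact_mod_cast hm
  have hnR : (0:ℝ) < n := by exact_mod_cast hn
  have hcongr : ∫ x in ((i:ℝ)/(m*n))..(((i:ℝ)+1)/(m*n)), beta (↑m*x) * beta (↑n*x)
      = ∫ x in ((i:ℝ)/(m*n))..(((i:ℝ)+1)/(m*n)),
          ((m:ℝ)*x - ((i/n : ℕ):ℝ) - 1/2) * ((n:ℝ)*x - ((i/m : ℕ):ℝ) - 1/2) := by
    apply intervalIntegral.integral_congr_ae
    have hb : ∀ᵐ x : ℝ, x ≠ ((i:ℝ)+1)/(m*n) := by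
      rw [MeasureTheory.ae_iff]
      simpa using Real.volume_singleton
    filter_upwards [hb] with x hxb hx
    have hab : (i:ℝ)/(m*n) ≤ ((i:ℝ)+1)/(m*n) := by
      gcongr <;> linarith
    rw [Set.uIoc_of_le hab] at hx
    have hxIoo : x ∈ Set.Ioo ((i:ℝ)/(m*n)) (((i:ℝ)+1)/(m*n)) := ⟨hx.1, lt_of_le_of_ne hx.2 hxb⟩
    have hf1 := floor_on_piece m n hm hn i x hxIoo
    have hxIoo' : x ∈ Set.Ioo ((i:ℝ)/(n*m)) (((i:ℝ)+1)/(n*m)) := by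
      rwa [mul_comm (n:ℝ) m]
    have hf2 := floor_on_piece n m hn hm i x hxIoo'
    unfold beta
    rw [hf1, hf2, Int.cast_natCast, Int.cast_natCast]
  rw [hcongr, poly_integral]
  have hr : ((i % n : ℕ):ℝ) = (i:ℝ) - n * ((i/n : ℕ):ℝ) := by
    have h := congrArg (Nat.cast : ℕ → ℝ) (Nat.div_add_mod i n)
    push_cast at h; linarith
  have hs : ((i % m : ℕ):ℝ) = (i:ℝ) - m * ((i/m : ℕ):ℝ) := by
    have h := congrArg (Nat.cast : ℕ → ℝ) (Nat.div_add_mod i m)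
    push_cast at h; linarith
  rw [hr, hs]
  field_simp
  ring


lemma hmod (g k u t : ℕ) (hg : 0 < g) (hk : 0 < k) (ht : t < g) :
    (g*u+t) % (g*k) = g*(u%k) + t := by
  have h1 : g*(u%k) + t < g*k := by
    have hlt := Nat.mod_lt u hk
    calc g*(u%k)+t < g*(u%k) + g := by omega
    _ = g*(u%k+1) := by ring
    _ ≤ g*k := Nat.mul_le_mul_left _ (by omega)
  have h2 : g*u+t = (g*k)*(u/k) + (g*(u%k)+t) := by
    conv_lhs => rw [← Nat.div_add_mod u k]
    ring
  rw [h2, Nat.mul_add_mod, Nat.mod_eq_of_lt h1]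

lemma hdiv (g k u t : ℕ) (hg : 0 < g) (hk : 0 < k) (ht : t < g) :
    (g*u+t) / (g*k) = u/k := by
  have h1 : g*(u%k) + t < g*k := by
    have hlt := Nat.mod_lt u hk
    calc g*(u%k)+t < g*(u%k) + g := by omega
    _ = g*(u%k+1) := by ring
    _ ≤ g*k := Nat.mul_le_mul_left _ (by omega)
  have h2 : g*u+t = (g*k)*(u/k) + (g*(u%k)+t) := by
    conv_lhs => rw [← Nat.div_add_mod u k]
    ring
  rw [h2, Nat.mul_add_div (by positivity), Nat.div_eq_of_lt h1, add_zero]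

lemma sum_blocks (c L : ℕ) (H : ℕ → ℝ) :
    ∑ i ∈ range (c*L), H i = ∑ p ∈ range c ×ˢ range L, H (p.1*L+p.2) := by
  apply Finset.sum_nbij' (fun i => (i/L, i%L)) (fun p => p.1*L+p.2)
  · intro i hi
    simp only [mem_range, mem_product] at *
    have hL : 0 < L := by
      rcases Nat.eq_zero_or_pos L with h|h
      · subst h; omega
      · exact h
    exact ⟨(Nat.div_lt_iff_lt_mul hL).2 (by omega), Nat.mod_lt _ hL⟩
  · intro p hp
    simp only [mem_range, mem_product] at *
    calc p.1*L+p.2 < p.1*L+L := by omega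
    _ = (p.1+1)*L := by ring
    _ ≤ c*L := Nat.mul_le_mul_right _ (by omega)
  · intro i _; exact Nat.div_add_mod' i L
  · intro p hp
    simp only [mem_range, mem_product] at hp
    have h1 : (p.1*L+p.2)/L = p.1 := by
      rw [mul_comm, Nat.mul_add_div (by omega), Nat.div_eq_of_lt hp.2, add_zero]
    have h2 : (p.1*L+p.2)%L = p.2 := by
      rw [mul_comm, Nat.mul_add_mod, Nat.mod_eq_of_lt hp.2]
    simp [h1, h2]
  · intro i _
    have : i/L*L + i%L = i := Nat.div_add_mod' i L
    show H i = H (i/L*L + i%L)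
    rw [this]

lemma crt_uniq {n' m' : ℕ} (hco : Nat.Coprime n' m') (x y : ℕ)
    (hx : x < n'*m') (hy : y < n'*m') (h1 : x % n' = y % n') (h2 : x % m' = y % m') :
    x = y := by
  have h : x ≡ y [MOD n'*m'] := (Nat.modEq_and_modEq_iff_modEq_mul hco).1 ⟨h1, h2⟩
  have h' : x % (n'*m') = y % (n'*m') := h
  rwa [Nat.mod_eq_of_lt hx, Nat.mod_eq_of_lt hy] at h'

lemma sum_crt (g n' m' : ℕ) (hg : 0 < g) (hn' : 0 < n') (hm' : 0 < m')
    (hco : Nat.Coprime n' m') (F : ℕ → ℕ → ℝ) :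
    ∑ u ∈ range (g*(n'*m')), F (u % (g*n')) (u % (g*m'))
      = ∑ p ∈ range g ×ˢ (range n' ×ˢ range m'), F (g*p.2.1+p.1) (g*p.2.2+p.1) := by
  have hnm' : 0 < n'*m' := by positivity
  set w : ℕ → ℕ → ℕ := fun a b => (Nat.chineseRemainder hco a b : ℕ) % (n'*m') with hw
  have hwlt : ∀ a b, w a b < n'*m' := fun a b => Nat.mod_lt _ hnm'
  have hwn : ∀ a b, a < n' → (w a b) % n' = a := by
    intro a b ha
    have h1 : (Nat.chineseRemainder hco a b : ℕ) % n' = a % n' :=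
      (Nat.chineseRemainder hco a b).2.1
    rw [hw]
    simp only []
    rw [Nat.mod_mod_of_dvd _ ⟨m', rfl⟩, h1, Nat.mod_eq_of_lt ha]
  have hwm : ∀ a b, b < m' → (w a b) % m' = b := by
    intro a b hb
    have h1 : (Nat.chineseRemainder hco a b : ℕ) % m' = b % m' :=
      (Nat.chineseRemainder hco a b).2.2
    rw [hw]
    simp only []
    rw [Nat.mod_mod_of_dvd _ ⟨n', mul_comm n' m'⟩, h1, Nat.mod_eq_of_lt hb]
  apply Finset.sum_nbij' (fun u => (u % g, ((u % (g*n'))/g, (u % (g*m'))/g)))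
    (fun p => g*(w p.2.1 p.2.2)+p.1)
  · intro u hu
    simp only [mem_range, mem_product] at *
    refine ⟨Nat.mod_lt _ hg, ?_, ?_⟩
    · exact Nat.div_lt_of_lt_mul (by rw [mul_comm]; exact Nat.mod_lt _ (by positivity))
    · exact Nat.div_lt_of_lt_mul (by rw [mul_comm]; exact Nat.mod_lt _ (by positivity))
  · intro p hp
    simp only [mem_range, mem_product] at *
    calc g*(w p.2.1 p.2.2)+p.1 < g*(w p.2.1 p.2.2)+g := by omega
    _ = g*(w p.2.1 p.2.2+1) := by ring
    _ ≤ g*(n'*m') := Nat.mul_le_mul_left _ (hwlt _ _)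
  · -- left inverse
    intro u hu
    simp only [mem_range] at hu
    obtain ⟨u', t, ht, rfl⟩ : ∃ u' t, t < g ∧ g*u'+t = u :=
      ⟨u/g, u%g, Nat.mod_lt _ hg, Nat.div_add_mod u g⟩
    have hu' : u' < n'*m' := by
      by_contra h
      push_neg at h
      have : g*(n'*m') ≤ g*u' := Nat.mul_le_mul_left _ h
      omega
    have e1 : (g*u'+t) % g = t := by rw [Nat.mul_add_mod, Nat.mod_eq_of_lt ht]
    have e2 : ((g*u'+t) % (g*n'))/g = u' % n' := by
      rw [hmod g n' u' t hg hn' ht, Nat.mul_add_div hg, Nat.div_eq_of_lt ht, add_zero]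
    have e3 : ((g*u'+t) % (g*m'))/g = u' % m' := by
      rw [hmod g m' u' t hg hm' ht, Nat.mul_add_div hg, Nat.div_eq_of_lt ht, add_zero]
    simp only [e1, e2, e3]
    have : w (u' % n') (u' % m') = u' := by
      apply crt_uniq hco _ _ (hwlt _ _) hu'
      · rw [hwn _ _ (Nat.mod_lt _ hn')]
      · rw [hwm _ _ (Nat.mod_lt _ hm')]
    rw [this]
  · -- right inverse
    intro p hp
    simp only [mem_range, mem_product] at hp
    obtain ⟨hp1, hp2, hp3⟩ := hp
    have e1 : (g*(w p.2.1 p.2.2)+p.1) % g = p.1 := by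
      rw [Nat.mul_add_mod, Nat.mod_eq_of_lt hp1]
    have e2 : ((g*(w p.2.1 p.2.2)+p.1) % (g*n'))/g = p.2.1 := by
      rw [hmod g n' _ _ hg hn' hp1, Nat.mul_add_div hg, Nat.div_eq_of_lt hp1, add_zero,
        hwn _ _ hp2]
    have e3 : ((g*(w p.2.1 p.2.2)+p.1) % (g*m'))/g = p.2.2 := by
      rw [hmod g m' _ _ hg hm' hp1, Nat.mul_add_div hg, Nat.div_eq_of_lt hp1, add_zero,
        hwm _ _ hp3]
    simp only [e1, e2, e3]
  · -- summand
    intro u hu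
    simp only [mem_range] at hu
    obtain ⟨u', t, ht, rfl⟩ : ∃ u' t, t < g ∧ g*u'+t = u :=
      ⟨u/g, u%g, Nat.mod_lt _ hg, Nat.div_add_mod u g⟩
    have e1 : (g*u'+t) % g = t := by rw [Nat.mul_add_mod, Nat.mod_eq_of_lt ht]
    have e2 : ((g*u'+t) % (g*n'))/g = u' % n' := by
      rw [hmod g n' u' t hg hn' ht, Nat.mul_add_div hg, Nat.div_eq_of_lt ht, add_zero]
    have e3 : ((g*u'+t) % (g*m'))/g = u' % m' := by
      rw [hmod g m' u' t hg hm' ht, Nat.mul_add_div hg, Nat.div_eq_of_lt ht, add_zero]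
    simp only [e1, e2, e3]
    rw [hmod g n' u' t hg hn' ht, hmod g m' u' t hg hm' ht]


lemma sum_id_real (k : ℕ) : ∑ t ∈ range k, (t:ℝ) = ((k:ℝ)*k - k)/2 := by
  induction k with
  | zero => simp
  | succ k ih => rw [Finset.sum_range_succ, ih]; push_cast; ring

lemma sum_sq_real (k : ℕ) : ∑ t ∈ range k, (t:ℝ)^2 = (2*(k:ℝ)^3 - 3*(k:ℝ)^2 + k)/6 := by
  induction k with
  | zero => simp
  | succ k ih => rw [Finset.sum_range_succ, ih]; push_cast; ring

lemma sumA (g k t : ℕ) (hg : 0 < g) (hk : 0 < k) :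
    ∑ a ∈ range k, (((g*a+t : ℕ):ℝ)/((g:ℝ)*k) - 1/2) = (t:ℝ)/g - 1/2 := by
  have hgR : (0:ℝ) < g := by exact_mod_cast hg
  have hkR : (0:ℝ) < k := by exact_mod_cast hk
  calc ∑ a ∈ range k, (((g*a+t:ℕ):ℝ)/((g:ℝ)*k) - 1/2)
      = ∑ a ∈ range k, ((1:ℝ)/(k:ℝ) * a + ((t:ℝ)/((g:ℝ)*k) - 1/2)) := by
        refine sum_congr rfl fun a _ => ?_
        push_cast
        field_simp
        ring
    _ = (1:ℝ)/(k:ℝ) * (∑ a ∈ range k, (a:ℝ)) + k * ((t:ℝ)/((g:ℝ)*k) - 1/2) := by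
        rw [Finset.sum_add_distrib, ← Finset.mul_sum, Finset.sum_const, card_range,
          nsmul_eq_mul]
    _ = (t:ℝ)/g - 1/2 := by rw [sum_id_real]; field_simp; ring

lemma double_sum (K J : ℕ) (A B : ℕ → ℝ) (u v w : ℝ) :
    ∑ a ∈ range K, ∑ b ∈ range J, (A a * B b + A a * u + B b * v + w)
      = (∑ a ∈ range K, A a) * (∑ b ∈ range J, B b) + (∑ a ∈ range K, A a) * u * J
        + (∑ b ∈ range J, B b) * v * K + K*J*w := by
  have inner : ∀ a, ∑ b ∈ range J, (A a * B b + A a * u + B b * v + w)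
      = A a * (∑ b ∈ range J, B b) + A a * u * J + (∑ b ∈ range J, B b) * v + J * w := by
    intro a
    simp only [Finset.sum_add_distrib, ← Finset.mul_sum, ← Finset.sum_mul,
      Finset.sum_const, card_range, nsmul_eq_mul]
    ring
  rw [sum_congr rfl fun a _ => inner a]
  simp only [Finset.sum_add_distrib, ← Finset.mul_sum, ← Finset.sum_mul,
    Finset.sum_const, card_range, nsmul_eq_mul]
  ring

theorem stmt_0 (m n : ℕ) (hm : 0 < m) (hn : 0 < n) :
    ∫ x in (0:ℝ)..1, beta (m * x) * beta (n * x)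
      = (Nat.gcd m n : ℝ)^2 / (12 * m * n) := by
  have hmR : (0:ℝ) < m := by exact_mod_cast hm
  have hnR : (0:ℝ) < n := by exact_mod_cast hn
  set G := Nat.gcd m n with hG
  have hGpos : 0 < G := Nat.gcd_pos_of_pos_left n hm
  have hGR : (0:ℝ) < G := by exact_mod_cast hGpos
  set m' := m / G with hm'
  set n' := n / G with hn'
  have hmeq : m = G * m' := (Nat.mul_div_cancel' (Nat.gcd_dvd_left m n)).symm
  have hneq : n = G * n' := (Nat.mul_div_cancel' (Nat.gcd_dvd_right m n)).symm
  have hm'pos : 0 < m' := by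
    rcases Nat.eq_zero_or_pos m' with h | h
    · rw [h, mul_zero] at hmeq; omega
    · exact h
  have hn'pos : 0 < n' := by
    rcases Nat.eq_zero_or_pos n' with h | h
    · rw [h, mul_zero] at hneq; omega
    · exact h
  have hm'R : (0:ℝ) < m' := by exact_mod_cast hm'pos
  have hn'R : (0:ℝ) < n' := by exact_mod_cast hn'pos
  have hmeqR : (m:ℝ) = G * m' := by exact_mod_cast congrArg (Nat.cast : ℕ → ℝ) hmeq
  have hneqR : (n:ℝ) = G * n' := by exact_mod_cast congrArg (Nat.cast : ℕ → ℝ) hneq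
  have hco : Nat.Coprime n' m' := (Nat.coprime_div_gcd_div_gcd hGpos).symm
  -- define the piece-value function
  set P : ℕ → ℕ → ℝ := fun r s =>
    ((r:ℝ)/n - 1/2) * ((s:ℝ)/m - 1/2) + ((r:ℝ)/n - 1/2)/(2*m) + ((s:ℝ)/m - 1/2)/(2*n)
      + 1/(3*(m:ℝ)*n) with hP
  -- Step 1: split the integral
  have h1 : ∫ x in (0:ℝ)..1, beta (↑m * x) * beta (↑n * x)
      = ∑ i ∈ range (m*n), (1/((m:ℝ)*n)) * P (i % n) (i % m) := by
    have hadj := intervalIntegral.sum_integral_adjacent_intervals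
      (a := fun i : ℕ => (i:ℝ)/(m*n)) (n := m*n)
      (f := fun x => beta (↑m * x) * beta (↑n * x)) (μ := volume)
      (fun k _ => beta_ii m n _ _)
    have h00 : ((0:ℕ):ℝ)/((m:ℝ)*n) = 0 := by simp
    have h11 : ((m*n:ℕ):ℝ)/((m:ℝ)*n) = 1 := by push_cast; field_simp
    simp only [h00, h11] at hadj
    rw [← hadj]
    refine sum_congr rfl fun i _ => ?_
    have hcast : ((i+1:ℕ):ℝ) = (i:ℝ) + 1 := by push_cast; ring
    rw [hcast]
    exact piece m n hm hn i
  rw [h1, ← Finset.mul_sum]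
  -- Step 2: the sum
  have hsplit : m * n = G * (G * (n' * m')) := by rw [hmeq, hneq]; ring
  have h2 : ∑ i ∈ range (m*n), P (i % n) (i % m)
      = ∑ q ∈ range G, ∑ u ∈ range (G*(n'*m')), P (u % n) (u % m) := by
    rw [hsplit, sum_blocks G (G*(n'*m')) (fun i => P (i % n) (i % m)),
      Finset.sum_product]
    refine sum_congr rfl fun q _ => sum_congr rfl fun u _ => ?_
    have hdn : n ∣ G*(n'*m') := ⟨m', by rw [hneq]; ring⟩
    have hdm : m ∣ G*(n'*m') := ⟨n', by rw [hmeq]; ring⟩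
    obtain ⟨c, hc⟩ := hdn
    obtain ⟨d, hd⟩ := hdm
    have e1 : (q*(G*(n'*m'))+u) % n = u % n := by
      rw [hc, show q*(n*c) = n*(q*c) by ring, Nat.mul_add_mod]
    have e2 : (q*(G*(n'*m'))+u) % m = u % m := by
      rw [hd, show q*(m*d) = m*(q*d) by ring, Nat.mul_add_mod]
    rw [e1, e2]
  have h3 : ∑ u ∈ range (G*(n'*m')), P (u % n) (u % m)
      = ∑ t ∈ range G, ∑ a ∈ range n', ∑ b ∈ range m', P (G*a+t) (G*b+t) := by
    have := sum_crt G n' m' hGpos hn'pos hm'pos hco P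
    rw [hneq, hmeq]
    rw [this]
    simp only [Finset.sum_product]
  -- Step 3: inner sums
  set ct : ℕ → ℝ := fun t => (t:ℝ)/G - 1/2 with hct
  have hsumA : ∀ t, ∑ a ∈ range n', (((G*a+t:ℕ):ℝ)/(n:ℝ) - 1/2) = ct t := by
    intro t
    rw [hneqR]
    exact sumA G n' t hGpos hn'pos
  have hsumB : ∀ t, ∑ b ∈ range m', (((G*b+t:ℕ):ℝ)/(m:ℝ) - 1/2) = ct t := by
    intro t
    rw [hmeqR]
    exact sumA G m' t hGpos hm'pos
  have h4 : ∀ t, ∑ a ∈ range n', ∑ b ∈ range m', P (G*a+t) (G*b+t)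
      = ct t * ct t + ct t * (1/(2*(m:ℝ))) * m' + ct t * (1/(2*(n:ℝ))) * n'
        + (n':ℝ)*m'*(1/(3*(m:ℝ)*n)) := by
    intro t
    have hshape : ∀ a b : ℕ, P (G*a+t) (G*b+t)
        = (((G*a+t:ℕ):ℝ)/(n:ℝ) - 1/2) * (((G*b+t:ℕ):ℝ)/(m:ℝ) - 1/2)
          + (((G*a+t:ℕ):ℝ)/(n:ℝ) - 1/2) * (1/(2*(m:ℝ)))
          + (((G*b+t:ℕ):ℝ)/(m:ℝ) - 1/2) * (1/(2*(n:ℝ))) + 1/(3*(m:ℝ)*n) := by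
      intro a b
      rw [hP]
      push_cast
      ring
    rw [sum_congr rfl fun a _ => sum_congr rfl fun b _ => hshape a b]
    rw [double_sum n' m' _ _ (1/(2*(m:ℝ))) (1/(2*(n:ℝ))) (1/(3*(m:ℝ)*n)), hsumA, hsumB]
  -- Step 4: the t-sum
  have hsct : ∑ t ∈ range G, ct t = -(1/2) := by
    rw [hct]
    simp only []
    rw [Finset.sum_sub_distrib, ← Finset.sum_div, sum_id_real, Finset.sum_const, card_range,
      nsmul_eq_mul]
    field_simp
    ring
  have hsct2 : ∑ t ∈ range G, ct t * ct t = ((G:ℝ)^2+2)/(12*G) := by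
    have : ∀ t : ℕ, ct t * ct t = (1/((G:ℝ)^2)) * (t:ℝ)^2 - (1/(G:ℝ)) * (t:ℝ) + 1/4 := by
      intro t
      rw [hct]
      field_simp
      ring
    rw [sum_congr rfl fun t _ => this t]
    rw [Finset.sum_add_distrib, Finset.sum_sub_distrib, ← Finset.mul_sum, ← Finset.mul_sum,
      sum_sq_real, sum_id_real, Finset.sum_const, card_range, nsmul_eq_mul]
    field_simp
    ring
  have h5 : ∑ t ∈ range G, ∑ a ∈ range n', ∑ b ∈ range m', P (G*a+t) (G*b+t)
      = (G:ℝ)/12 := by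
    rw [sum_congr rfl fun t _ => h4 t]
    simp only [Finset.sum_add_distrib, ← Finset.sum_mul, ← Finset.mul_sum,
      Finset.sum_const, card_range, nsmul_eq_mul, hsct, hsct2]
    rw [hmeqR, hneqR]
    field_simp
    ring
  rw [h2, h3]
  rw [sum_congr rfl fun q (_ : q ∈ range G) => h5]
  rw [Finset.sum_const, card_range, nsmul_eq_mul]
  field_simp
end

section
/- For 0 < t ≤ 1 a real number and n a positive integer, B_n(t) = η̃(tn) - (⌊tn⌋/n)·B⁻_{⌊tn⌋}(1/t - ⌊1/t⌋) + (tn - ⌊tn⌋)/(2n), where B⁻ denotes the left-hand limit, B_n(s) = (1/n)·Σ_{k=1}^{n} β(ks) with β(s) = s - ⌊s⌋ - 1/2, and η̃(x) = (x - ⌊x⌋)(x - ⌊x⌋ - 1)/(2x) for x ≠ 0, η̃(0) = -1/2. (If ⌊tn⌋ = 0 the second term is interpreted as 0.) -/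
open Finset Filter Topology Set

noncomputable def B (m : ℕ) (s : ℝ) : ℝ :=
  (1/(m : ℝ)) * ∑ k ∈ Finset.Icc 1 m, beta (k * s)

noncomputable def eta (x : ℝ) : ℝ :=
  if x = 0 then -1/2 else (x - ⌊x⌋) * (x - ⌊x⌋ - 1) / (2*x)

lemma sum_Icc_id_real (n : ℕ) : ∑ k ∈ Finset.Icc 1 n, (k:ℝ) = n*(n+1)/2 := by
  induction n with
  | zero => simp
  | succ n ih =>
    rw [Finset.sum_Icc_succ_top (by omega)]
    push_cast
    rw [ih]; ring

lemma B_expand (m : ℕ) (s : ℝ) :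
    B m s = (1/(m:ℝ)) * (s * ((m:ℝ)*(m+1)/2)
      - (∑ k ∈ Finset.Icc 1 m, (⌊(k:ℝ)*s⌋:ℝ)) - m/2) := by
  unfold B beta
  congr 1
  rw [Finset.sum_sub_distrib, Finset.sum_sub_distrib, ← Finset.sum_mul, sum_Icc_id_real,
    Finset.sum_const, Nat.card_Icc]
  simp [nsmul_eq_mul]
  ring

lemma reciprocity (t : ℝ) (ht0 : 0 < t) (n : ℕ) :
    ∑ k ∈ Finset.Icc 1 n, (⌊(k:ℝ)*t⌋:ℝ)
      = (⌊t*n⌋₊ : ℝ) * (n+1) - ∑ j ∈ Finset.Icc 1 ⌊t*n⌋₊, (⌈(j:ℝ)/t⌉₊ : ℝ) := by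
  set m := ⌊t*n⌋₊ with hm
  have hmn : (m : ℝ) ≤ t*n := Nat.floor_le (by positivity)
  have h1 : ∀ k ∈ Finset.Icc 1 n, (⌊(k:ℝ)*t⌋:ℝ)
      = ∑ j ∈ Finset.Icc 1 m, (if (j:ℝ) ≤ (k:ℝ)*t then (1:ℝ) else 0) := by
    intro k hk
    have hk' := Finset.mem_Icc.mp hk
    have hkt : (0:ℝ) ≤ (k:ℝ)*t := by positivity
    have hfl : ⌊(k:ℝ)*t⌋₊ ≤ m := by
      apply Nat.floor_mono
      rw [mul_comm t (n:ℝ)]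
      have : (k:ℝ) ≤ n := by exact_mod_cast hk'.2
      nlinarith
    rw [Finset.sum_boole]
    have : Finset.filter (fun j : ℕ => (j:ℝ) ≤ (k:ℝ)*t) (Finset.Icc 1 m)
        = Finset.Icc 1 ⌊(k:ℝ)*t⌋₊ := by
      ext j
      simp only [Finset.mem_filter, Finset.mem_Icc]
      constructor
      · rintro ⟨⟨h1', _⟩, h3⟩
        exact ⟨h1', Nat.le_floor h3⟩
      · rintro ⟨h1', h2'⟩
        exact ⟨⟨h1', le_trans h2' hfl⟩, (Nat.le_floor_iff hkt).mp h2'⟩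
    rw [this, Nat.card_Icc]
    rw [← natCast_floor_eq_intCast_floor hkt]
    simp
  rw [Finset.sum_congr rfl h1, Finset.sum_comm]
  have h2 : ∀ j ∈ Finset.Icc 1 m, ∑ k ∈ Finset.Icc 1 n, (if (j:ℝ) ≤ (k:ℝ)*t then (1:ℝ) else 0)
      = (n:ℝ) + 1 - (⌈(j:ℝ)/t⌉₊ : ℝ) := by
    intro j hj
    have hj' := Finset.mem_Icc.mp hj
    have hjpos : (0:ℝ) < j := by exact_mod_cast hj'.1
    have hcle : ⌈(j:ℝ)/t⌉₊ ≤ n := by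
      apply Nat.ceil_le.mpr
      rw [div_le_iff₀ ht0]
      have : (j:ℝ) ≤ m := by exact_mod_cast hj'.2
      rw [mul_comm]
      linarith
    have hc1 : 1 ≤ ⌈(j:ℝ)/t⌉₊ := by
      apply Nat.one_le_ceil_iff.mpr
      positivity
    rw [Finset.sum_boole]
    have : Finset.filter (fun k : ℕ => (j:ℝ) ≤ (k:ℝ)*t) (Finset.Icc 1 n)
        = Finset.Icc ⌈(j:ℝ)/t⌉₊ n := by
      ext k
      simp only [Finset.mem_filter, Finset.mem_Icc]
      constructor
      · rintro ⟨⟨_, hk2⟩, h3⟩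
        refine ⟨Nat.ceil_le.mpr ?_, hk2⟩
        rw [div_le_iff₀ ht0]
        linarith [mul_comm t (k:ℝ)]
      · rintro ⟨hk1, hk2⟩
        refine ⟨⟨le_trans hc1 hk1, hk2⟩, ?_⟩
        have := Nat.ceil_le.mp hk1
        rw [div_le_iff₀ ht0] at this
        linarith [mul_comm t (k:ℝ)]
    rw [this, Nat.card_Icc]
    rw [Nat.cast_sub (by omega)]
    push_cast
    ring
  rw [Finset.sum_congr rfl h2, Finset.sum_sub_distrib, Finset.sum_const, Nat.card_Icc]
  simp [nsmul_eq_mul]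
  ring

lemma left_limit (m : ℕ) (x : ℝ) :
    Filter.Tendsto (fun s => B m s) (nhdsWithin x (Set.Iio x))
      (nhds ((1/(m:ℝ)) * ∑ j ∈ Finset.Icc 1 m, ((j:ℝ)*x - (⌈(j:ℝ)*x⌉:ℝ) + 1/2))) := by
  unfold B
  apply Filter.Tendsto.const_mul
  apply tendsto_finset_sum
  intro j hj
  have hj1 : 1 ≤ j := (Finset.mem_Icc.mp hj).1
  have hjpos : (0:ℝ) < j := by exact_mod_cast hj1
  have hb : ((⌈(j:ℝ)*x⌉:ℝ) - 1)/(j:ℝ) < x := by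
    rw [div_lt_iff₀ hjpos]
    have := Int.ceil_lt_add_one ((j:ℝ)*x)
    nlinarith
  have hev : ∀ᶠ s in nhdsWithin x (Set.Iio x),
      (j:ℝ)*s - ((⌈(j:ℝ)*x⌉:ℝ) - 1) - 1/2 = beta ((j:ℝ)*s) := by
    filter_upwards [Ioo_mem_nhdsLT_of_mem (Set.mem_Ioc.mpr ⟨hb, le_refl x⟩)] with s hs
    have hfl : ⌊(j:ℝ)*s⌋ = ⌈(j:ℝ)*x⌉ - 1 := by
      rw [Int.floor_eq_iff]
      constructor
      · push_cast
        have := hs.1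
        rw [div_lt_iff₀ hjpos] at this
        nlinarith
      · push_cast
        have hsx : (j:ℝ)*s < (j:ℝ)*x := by
          have := hs.2
          nlinarith
        have := Int.le_ceil ((j:ℝ)*x)
        linarith
    unfold beta
    rw [hfl]
    push_cast
    ring
  have htarget : (j:ℝ)*x - (⌈(j:ℝ)*x⌉:ℝ) + 1/2 = (j:ℝ)*x - ((⌈(j:ℝ)*x⌉:ℝ) - 1) - 1/2 := by
    ring
  rw [htarget]
  apply Filter.Tendsto.congr' hev
  have hcont : Filter.Tendsto (fun s : ℝ => (j:ℝ)*s - ((⌈(j:ℝ)*x⌉:ℝ) - 1) - 1/2)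
      (nhds x) (nhds ((j:ℝ)*x - ((⌈(j:ℝ)*x⌉:ℝ) - 1) - 1/2)) := by
    apply Filter.Tendsto.sub_const
    apply Filter.Tendsto.sub_const
    exact (continuous_const.mul continuous_id).tendsto x
  exact hcont.mono_left nhdsWithin_le_nhds

theorem stmt_6 (t : ℝ) (ht0 : 0 < t) (ht1 : t ≤ 1) (n : ℕ) (hn : 0 < n)
    (L : ℝ)
    (hL : Filter.Tendsto (fun s => B ⌊t * n⌋₊ s)
      (nhdsWithin (1/t - ⌊1/t⌋) (Set.Iio (1/t - ⌊1/t⌋))) (nhds L)) :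
    B n t = eta (t * n) - ((⌊t * n⌋₊ : ℝ) / n) * L
      + (t * n - ⌊t * n⌋₊) / (2 * n) := by
  set m := ⌊t * n⌋₊ with hm
  set x : ℝ := 1/t - ⌊1/t⌋ with hx
  set q : ℝ := (⌊(1:ℝ)/t⌋ : ℝ) with hq
  have hne : (n:ℝ) ≠ 0 := Nat.cast_ne_zero.mpr hn.ne'
  have htn0 : (0:ℝ) < t * n := by positivity
  -- identify L
  have hL0 := left_limit m x
  have hLval : L = (1/(m:ℝ)) * ∑ j ∈ Finset.Icc 1 m, ((j:ℝ)*x - (⌈(j:ℝ)*x⌉:ℝ) + 1/2) :=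
    tendsto_nhds_unique hL hL0
  -- abbreviations
  set S : ℝ := ∑ j ∈ Finset.Icc 1 m, (⌈(j:ℝ)*x⌉:ℝ) with hS
  have hLsum : L = (1/(m:ℝ)) * (x * ((m:ℝ)*(m+1)/2) - S + m/2) := by
    rw [hLval]
    congr 1
    rw [Finset.sum_add_distrib, Finset.sum_sub_distrib, ← Finset.sum_mul, sum_Icc_id_real,
      Finset.sum_const, Nat.card_Icc]
    simp [nsmul_eq_mul]
    ring
  have hmL : ((m:ℝ)/n) * L = (1/(n:ℝ)) * (x * ((m:ℝ)*(m+1)/2) - S + m/2) := by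
    rcases Nat.eq_zero_or_pos m with h0 | hpos
    · have hS0 : S = 0 := by rw [hS, h0]; simp
      rw [h0, hS0]
      simp
    · have hmne : (m:ℝ) ≠ 0 := Nat.cast_ne_zero.mpr hpos.ne'
      rw [hLsum]
      field_simp
  -- ceiling split
  have hceil : ∀ j ∈ Finset.Icc 1 m, (⌈(j:ℝ)/t⌉₊ : ℝ) = (j:ℝ)*q + (⌈(j:ℝ)*x⌉:ℝ) := by
    intro j hj
    have hj1 : 1 ≤ j := (Finset.mem_Icc.mp hj).1
    have hjpos : (0:ℝ) < j := by exact_mod_cast hj1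
    have hpos : (0:ℝ) ≤ (j:ℝ)/t := by positivity
    rw [natCast_ceil_eq_intCast_ceil hpos]
    have : (j:ℝ)/t = (j:ℝ)*x + ((j*⌊(1:ℝ)/t⌋ : ℤ):ℝ) := by
      push_cast
      rw [hx]
      field_simp
      ring
    rw [this, Int.ceil_add_intCast]
    push_cast
    ring
  have hsum_ceil : ∑ j ∈ Finset.Icc 1 m, (⌈(j:ℝ)/t⌉₊ : ℝ)
      = q * ((m:ℝ)*(m+1)/2) + S := by
    rw [Finset.sum_congr rfl hceil, Finset.sum_add_distrib, ← Finset.sum_mul, sum_Icc_id_real]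
    ring
  -- floor of t*n as int
  have hfl_tn : (⌊t*(n:ℝ)⌋ : ℝ) = (m:ℝ) := by
    rw [hm, natCast_floor_eq_intCast_floor htn0.le]
  -- main computation
  have hBn := B_expand n t
  have hrec := reciprocity t ht0 n
  rw [← hm] at hrec
  have hmul : ∀ k : ℕ, (k:ℝ)*t = (k:ℝ)*t := fun _ => rfl
  -- rewrite the floor sum in hBn
  have hBn' : B n t = (1/(n:ℝ)) * (t * ((n:ℝ)*(n+1)/2)
      - ((m:ℝ)*(n+1) - (q * ((m:ℝ)*(m+1)/2) + S)) - n/2) := by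
    rw [hBn]
    congr 2
    have : ∑ k ∈ Finset.Icc 1 n, (⌊(k:ℝ)*t⌋:ℝ) = ∑ k ∈ Finset.Icc 1 n, (⌊(k:ℝ)*t⌋:ℝ) := rfl
    rw [show (∑ k ∈ Finset.Icc 1 n, (⌊(k:ℝ)*t⌋:ℝ)) = (m:ℝ)*(n+1) - ∑ j ∈ Finset.Icc 1 m, (⌈(j:ℝ)/t⌉₊ : ℝ) from hrec, hsum_ceil]
  -- eta value
  have heta : eta (t*n) = (t*n - m) * (t*n - m - 1) / (2*(t*n)) := by
    unfold eta
    rw [if_neg htn0.ne']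
    rw [show (⌊t*(n:ℝ)⌋ : ℝ) = (m:ℝ) from hfl_tn]
  rw [hBn', heta, hmL]
  have hqx : q = 1/t - x := by rw [hx]; ring
  rw [hqx]
  field_simp
  ring
end

section
/- Let α₁,…,α_m be positive integers and let J* = (0,1) \ ℚ. For t ∈ J* define ϑ₀(t) = t and ϑ_j(t) = 1/(ϑ_{j-1}(t) - ⌊ϑ_{j-1}(t)⌋) for j ≥ 1. Let M = { t ∈ J* : ϑ_j(t) < α_j for all j = 1,…,m }. Then the Lebesgue measure of M satisfies ∏_{j=1}^m (1 - 1/α_j)² ≤ |M| ≤ ∏_{j=1}^m (1 - 1/α_j). -/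
open MeasureTheory

/-- Complete quotients: ϑ₀(t) = t, ϑ_{j+1}(t) = 1/(ϑ_j(t) - ⌊ϑ_j(t)⌋). -/
noncomputable def theta : ℕ → ℝ → ℝ
  | 0, t => t
  | (j+1), t => 1 / Int.fract (theta j t)

namespace Stmt12

noncomputable def G (t : ℝ) : ℝ := Int.fract (1 / Int.fract t)

lemma theta_succ (t : ℝ) (j : ℕ) (hj : 1 ≤ j) : theta (j+1) t = theta j (G t) := by
  induction j with
  | zero => omega
  | succ k ih =>
    rcases Nat.eq_zero_or_pos k with hk | hk
    · subst hk
      show 1 / Int.fract (theta 1 t) = 1 / Int.fract (G t)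
      simp [theta, G, Int.fract_fract]
    · show 1 / Int.fract (theta (k+1) t) = 1 / Int.fract (theta k (G t))
      rw [ih hk]

lemma measurable_theta (j : ℕ) : Measurable (theta j) := by
  induction j with
  | zero => exact measurable_id
  | succ k ih =>
    show Measurable fun t => 1 / Int.fract (theta k t)
    exact measurable_const.div (measurable_fract.comp ih)

def Mset (m : ℕ) (α : ℕ → ℕ) : Set ℝ :=
  {t | t ∈ Set.Ioo (0:ℝ) 1 ∧ Irrational t ∧ ∀ j, 1 ≤ j → j ≤ m → theta j t < α j}

lemma Mset_subset (m : ℕ) (α : ℕ → ℕ) : Mset m α ⊆ Set.Ioo (0:ℝ) 1 := fun _ h => h.1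

lemma measurableSet_Mset (m : ℕ) (α : ℕ → ℕ) : MeasurableSet (Mset m α) := by
  have : Mset m α = (Set.Ioo (0:ℝ) 1 ∩ (Set.range ((↑) : ℚ → ℝ))ᶜ) ∩
      ⋂ j ∈ Set.Icc 1 m, theta j ⁻¹' (Set.Iio (α j : ℝ)) := by
    ext t
    simp only [Mset, Set.mem_setOf_eq, Set.mem_inter_iff, Set.mem_compl_iff, Set.mem_iInter,
      Set.mem_Icc, Set.mem_preimage, Set.mem_Iio, Irrational, and_assoc]
    tauto
  rw [this]
  exact ((measurableSet_Ioo.inter (Set.countable_range _).measurableSet.compl).inter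
    (MeasurableSet.biInter (Set.to_countable _) fun j _ => (measurable_theta j) measurableSet_Iio))

lemma theta_one (t : ℝ) (ht : t ∈ Set.Ioo (0:ℝ) 1) : theta 1 t = 1 / t := by
  show 1 / Int.fract (theta 0 t) = 1 / t
  rw [show theta 0 t = t from rfl, Int.fract_eq_self.2 ⟨ht.1.le, ht.2⟩]

lemma Mset_succ (m : ℕ) (α : ℕ → ℕ) :
    Mset (m+1) α = ⋃ a ∈ Finset.Icc 1 (α 1 - 1),
      (fun x : ℝ => ((a : ℝ) + x)⁻¹) '' Mset m (fun j => α (j+1)) := by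
  ext t
  simp only [Set.mem_iUnion, Set.mem_image, Finset.mem_Icc, exists_prop]
  constructor
  · rintro ⟨ht, hirr, hθ⟩
    have hfr : Int.fract t = t := Int.fract_eq_self.2 ⟨ht.1.le, ht.2⟩
    set u : ℝ := 1 / t with hu
    have hθ1 : theta 1 t = u := theta_one t ht
    have hui : Irrational u := by rw [hu, one_div]; exact hirr.inv
    have hu1 : 1 < u := by rw [hu, lt_div_iff₀ ht.1]; linarith [ht.2]
    have hua : u < α 1 := hθ1 ▸ hθ 1 le_rfl (by omega)
    have hu0 : (0:ℝ) ≤ u := zero_le_one.trans hu1.le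
    set a : ℕ := ⌊u⌋₊ with ha
    have ha1 : 1 ≤ a := Nat.le_floor (by exact_mod_cast hu1.le)
    have hau : a < α 1 := (Nat.floor_lt hu0).2 (by exact_mod_cast hua)
    have hflz : ((a : ℕ) : ℤ) = ⌊u⌋ := by
      rw [ha, ← Int.floor_toNat, Int.toNat_of_nonneg (Int.floor_nonneg.2 hu0)]
    have hfl : ((a : ℕ) : ℝ) = (⌊u⌋ : ℝ) := by exact_mod_cast hflz
    set x : ℝ := Int.fract u with hx
    have hux : (a : ℝ) + x = u := by rw [hfl, hx]; exact Int.floor_add_fract u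
    have hxirr : Irrational x := by
      rw [hx, Int.fract]; exact hui.sub_intCast _
    have hx0 : 0 < x := lt_of_le_of_ne (hx ▸ Int.fract_nonneg u) (Ne.symm hxirr.ne_zero)
    have hx1 : x < 1 := Int.fract_lt_one u
    have hGt : G t = x := by rw [Stmt12.G, hfr, ← hu, hx]
    refine ⟨a, ⟨ha1, by omega⟩, x, ⟨⟨hx0, hx1⟩, hxirr, ?_⟩, ?_⟩
    · intro j hj1 hjm
      have := hθ (j+1) (by omega) (by omega)
      rwa [theta_succ t j hj1, hGt] at this
    · rw [hux, hu]
      simp [ht.1.ne']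
  · rintro ⟨a, ⟨ha1, hau⟩, x, ⟨⟨hx0, hx1⟩, hxirr, hxθ⟩, rfl⟩
    have hα1 : a + 1 ≤ α 1 := by omega
    have ha1' : (1:ℝ) ≤ a := by exact_mod_cast ha1
    have hax : (1:ℝ) < (a:ℝ) + x := by linarith
    have haxpos : (0:ℝ) < (a:ℝ) + x := by linarith
    have ht : ((a:ℝ)+x)⁻¹ ∈ Set.Ioo (0:ℝ) 1 := ⟨inv_pos.2 haxpos, inv_lt_one_of_one_lt₀ hax⟩
    have hirr : Irrational (((a:ℝ)+x)⁻¹) := by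
      have : Irrational ((a:ℤ) + x) := hxirr.intCast_add a
      have : Irrational ((a:ℝ) + x) := by push_cast at this ⊢; exact this
      exact this.inv
    refine ⟨ht, hirr, ?_⟩
    have hθ1 : theta 1 (((a:ℝ)+x)⁻¹) = (a:ℝ) + x := by
      rw [theta_one _ ht, one_div, inv_inv]
    have hG : G (((a:ℝ)+x)⁻¹) = x := by
      rw [Stmt12.G, Int.fract_eq_self.2 ⟨ht.1.le, ht.2⟩, one_div, inv_inv]
      rw [show ((a:ℝ) + x) = ((a:ℤ):ℝ) + x by push_cast; ring, Int.fract_intCast_add,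
        Int.fract_eq_self.2 ⟨hx0.le, hx1⟩]
    intro j hj1 hjm
    match j, hj1 with
    | 1, _ =>
      rw [hθ1]
      calc (a:ℝ) + x < a + 1 := by linarith
        _ ≤ α 1 := by exact_mod_cast hα1
    | (k+2), _ =>
      rw [theta_succ _ (k+1) (by omega), hG]
      exact hxθ (k+1) (by omega) (by omega)

lemma integral_base (y : ℝ) (hy : 0 ≤ y) :
    ∫ x in Set.Ioo (0:ℝ) 1, ((1+y*x)^2)⁻¹ = (1+y)⁻¹ := by
  have hne : ∀ x ∈ Set.uIcc (0:ℝ) 1, 1 + y*x ≠ 0 := by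
    intro x hx
    rw [Set.uIcc_of_le zero_le_one] at hx
    nlinarith [hx.1, mul_nonneg hy hx.1]
  have hderiv : ∀ x ∈ Set.uIcc (0:ℝ) 1,
      HasDerivAt (fun x => x * (1+y*x)⁻¹) (((1+y*x)^2)⁻¹) x := by
    intro x hx
    have h1 : HasDerivAt (fun x : ℝ => 1+y*x) y x := by
      exact (((hasDerivAt_id x).const_mul y).const_add (1:ℝ)).congr_deriv (by simp)
    have h2 := h1.inv (hne x hx)
    have h3 := (hasDerivAt_id x).mul h2
    refine h3.congr_deriv ?_
    have := hne x hx
    simp only [Pi.inv_apply, id]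
    field_simp
    ring
  have hcont : ContinuousOn (fun x : ℝ => ((1+y*x)^2)⁻¹) (Set.uIcc 0 1) := by
    exact (((continuous_const.add (continuous_const.mul continuous_id)).pow 2).continuousOn).inv₀
      (fun x hx => pow_ne_zero _ (hne x hx))
  have := intervalIntegral.integral_eq_sub_of_hasDerivAt hderiv
    (hcont.intervalIntegrable)
  rw [← integral_Ioc_eq_integral_Ioo, ← intervalIntegral.integral_of_le zero_le_one, this]
  norm_num

lemma telescope (y : ℝ) (hy : 0 ≤ y) (n : ℕ) :
    ∑ a ∈ Finset.Icc 1 n, (((a:ℝ)+y) * ((a:ℝ)+y+1))⁻¹ = (1+y)⁻¹ - ((n:ℝ)+1+y)⁻¹ := by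
  induction n with
  | zero => simp
  | succ k ih =>
    rw [Finset.sum_Icc_succ_top (by omega), ih]
    have h1 : (0:ℝ) < (k:ℝ)+1+y := by positivity
    have h2 : (0:ℝ) < (k:ℝ)+1+y+1 := by positivity
    have : ((((k+1:ℕ):ℝ)+y) * (((k+1:ℕ):ℝ)+y+1))⁻¹ = ((k:ℝ)+1+y)⁻¹ - ((k:ℝ)+1+1+y)⁻¹ := by
      have e1 : ((k:ℝ)+1+y) ≠ 0 := h1.ne'
      have e2 : ((k:ℝ)+1+y+1) ≠ 0 := h2.ne'
      push_cast
      rw [eq_sub_iff_add_eq, mul_inv]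
      field_simp
      ring
    rw [this]
    push_cast
    ring

lemma image_eq (a : ℕ) (ha : 1 ≤ a) (s : Set ℝ) (hs : s ⊆ Set.Ioo 0 1) :
    (fun x : ℝ => ((a:ℝ)+x)⁻¹) '' s
      = Set.Ioo (((a:ℝ)+1)⁻¹) ((a:ℝ)⁻¹) ∩ (fun t : ℝ => t⁻¹ - a) ⁻¹' s := by
  have ha0 : (0:ℝ) < a := by exact_mod_cast ha
  ext t
  constructor
  · rintro ⟨x, hx, rfl⟩
    obtain ⟨hx0, hx1⟩ := hs hx
    have h1 : (0:ℝ) < (a:ℝ) + x := by linarith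
    refine ⟨⟨?_, ?_⟩, ?_⟩
    · exact inv_strictAnti₀ h1 (by linarith)
    · exact inv_strictAnti₀ ha0 (by linarith)
    · simpa [inv_inv, h1.ne'] using hx
  · rintro ⟨⟨ht1, ht2⟩, hpre⟩
    have h0 : (0:ℝ) < t := lt_trans (by positivity) ht1
    refine ⟨t⁻¹ - a, hpre, ?_⟩
    simp [h0.ne']

lemma Mset_zero_ae (α : ℕ → ℕ) : Mset 0 α =ᵐ[volume] Set.Ioo (0:ℝ) 1 := by
  have hnull : volume (Set.range ((↑) : ℚ → ℝ)) = 0 :=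
    (Set.countable_range _).measure_zero _
  rw [Filter.eventuallyEq_set]
  refine Filter.Eventually.mono ((MeasureTheory.measure_eq_zero_iff_ae_notMem).1 hnull) ?_
  intro x hx
  constructor
  · exact fun h => h.1
  · exact fun h => ⟨h, hx, fun j h1 h0 => by omega⟩

lemma integrableOn_aux (s : Set ℝ) (hs : MeasurableSet s) (hsub : s ⊆ Set.Ioo 0 1)
    (z : ℝ) (hz : 0 ≤ z) : IntegrableOn (fun x : ℝ => ((1+z*x)^2)⁻¹) s := by
  apply Measure.integrableOn_of_bounded (M := 1)
  · exact ((measure_mono hsub).trans_lt (by simp [Real.volume_Ioo])).ne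
  · exact (((measurable_const.add (measurable_const.mul measurable_id)).pow_const 2).inv).aestronglyMeasurable
  · rw [ae_restrict_iff' hs]
    refine ae_of_all _ fun x hx => ?_
    obtain ⟨hx0, hx1⟩ := hsub hx
    have h1 : (1:ℝ) ≤ (1+z*x)^2 := by nlinarith [mul_nonneg hz hx0.le]
    rw [Real.norm_eq_abs, abs_of_nonneg (by positivity)]
    exact inv_le_one_of_one_le₀ h1

lemma prod_Icc_shift (f : ℕ → ℝ) (m : ℕ) :
    ∏ j ∈ Finset.Icc 1 (m+1), f j = f 1 * ∏ j ∈ Finset.Icc 1 m, f (j+1) := by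
  induction m with
  | zero => simp
  | succ k ih =>
    rw [Finset.prod_Icc_succ_top (by omega : 1 ≤ k+1+1), ih,
      Finset.prod_Icc_succ_top (by omega : 1 ≤ k+1)]
    ring

lemma final_low (A y : ℝ) (hA : 1 ≤ A) (hy0 : 0 ≤ y) (hy1 : y ≤ 1) :
    (1 - A⁻¹)^2 * (1+y)⁻¹ ≤ (1+y)⁻¹ - (A+y)⁻¹ := by
  have h1 : (0:ℝ) < 1 + y := by linarith
  have h2 : (0:ℝ) < A + y := by linarith
  have h3 : (0:ℝ) < A := by linarith
  have e1 : (1+y)⁻¹ - (A+y)⁻¹ = (A-1) / ((1+y)*(A+y)) := by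
    field_simp
    ring
  have e2 : (1 - A⁻¹)^2 * (1+y)⁻¹ = (A-1)^2 / (A^2*(1+y)) := by
    field_simp
  rw [e1, e2, div_le_div_iff₀ (by positivity) (by positivity)]
  nlinarith [mul_nonneg (mul_nonneg (sub_nonneg.2 hA) (sub_nonneg.2 hA)) (sub_nonneg.2 hy1),
    mul_nonneg (mul_nonneg (mul_nonneg (sub_nonneg.2 hA) (sub_nonneg.2 hA)) (sub_nonneg.2 hy1)) hy0,
    mul_nonneg (mul_nonneg (sub_nonneg.2 hA) (sub_nonneg.2 hy1)) hy0]

lemma final_up (A y : ℝ) (hA : 1 ≤ A) (hy0 : 0 ≤ y) :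
    (1+y)⁻¹ - (A+y)⁻¹ ≤ (1 - A⁻¹) * (1+y)⁻¹ := by
  have h1 : (0:ℝ) < 1 + y := by linarith
  have h2 : (0:ℝ) < A + y := by linarith
  have h3 : (0:ℝ) < A := by linarith
  have e1 : (1+y)⁻¹ - (A+y)⁻¹ = (A-1) / ((1+y)*(A+y)) := by
    field_simp
    ring
  have e2 : (1 - A⁻¹) * (1+y)⁻¹ = (A-1) / (A*(1+y)) := by
    field_simp
  rw [e1, e2, div_le_div_iff₀ (by positivity) (by positivity)]
  nlinarith [mul_nonneg (mul_nonneg (sub_nonneg.2 hA) h1.le) hy0]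

lemma key : ∀ m (α : ℕ → ℕ), (∀ j, 1 ≤ j → j ≤ m → 0 < α j) → ∀ y : ℝ, 0 ≤ y → y ≤ 1 →
    (∏ j ∈ Finset.Icc 1 m, (1 - ((α j : ℝ))⁻¹))^2 * (1+y)⁻¹
        ≤ (∫ x in Mset m α, ((1+y*x)^2)⁻¹) ∧
    (∫ x in Mset m α, ((1+y*x)^2)⁻¹)
        ≤ (∏ j ∈ Finset.Icc 1 m, (1 - ((α j : ℝ))⁻¹)) * (1+y)⁻¹ := by
  intro m
  induction m with
  | zero =>
    intro α _ y hy0 _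
    rw [setIntegral_congr_set (Mset_zero_ae α), integral_base y hy0]
    simp
  | succ m ih =>
    intro α hα y hy0 hy1
    set α' : ℕ → ℕ := fun j => α (j+1) with hα'def
    have hα' : ∀ j, 1 ≤ j → j ≤ m → 0 < α' j := fun j h1 h2 => hα (j+1) (by omega) (by omega)
    set M' : Set ℝ := Mset m α' with hM'def
    set P' : ℝ := ∏ j ∈ Finset.Icc 1 m, (1 - ((α' j : ℝ))⁻¹) with hP'def
    have hone : ∀ j, 1 ≤ j → j ≤ m → (1:ℝ) ≤ (α' j : ℝ) := fun j h1 h2 => by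
      exact_mod_cast hα' j h1 h2
    have hP'0 : 0 ≤ P' := Finset.prod_nonneg fun j hj => by
      rw [Finset.mem_Icc] at hj
      have := hone j hj.1 hj.2
      have : ((α' j : ℝ))⁻¹ ≤ 1 := inv_le_one_of_one_le₀ this
      linarith
    have hA1 : 1 ≤ α 1 := hα 1 le_rfl (by omega)
    set A : ℝ := (α 1 : ℝ) with hAdef
    have hA : (1:ℝ) ≤ A := by rw [hAdef]; exact_mod_cast hA1
    have hMsub : M' ⊆ Set.Ioo 0 1 := Mset_subset m α'
    have hM'meas : MeasurableSet M' := measurableSet_Mset m α'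
    -- the pieces
    set S : ℕ → Set ℝ := fun a => (fun x : ℝ => ((a:ℝ)+x)⁻¹) '' M' with hSdef
    have hSsub : ∀ a : ℕ, 1 ≤ a → S a ⊆ Set.Ioo (((a:ℝ)+1)⁻¹) ((a:ℝ)⁻¹) := by
      intro a ha
      rw [hSdef]
      simp only
      rw [image_eq a ha M' hMsub]
      exact Set.inter_subset_left
    have hS01 : ∀ a : ℕ, 1 ≤ a → S a ⊆ Set.Ioo 0 1 := by
      intro a ha t ht
      have h2 := hSsub a ha ht
      have ha' : (1:ℝ) ≤ a := by exact_mod_cast ha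
      constructor
      · exact lt_trans (by positivity) h2.1
      · exact lt_of_lt_of_le h2.2 (inv_le_one_of_one_le₀ ha')
    have hSmeas : ∀ a : ℕ, 1 ≤ a → MeasurableSet (S a) := by
      intro a ha
      rw [hSdef]
      simp only
      rw [image_eq a ha M' hMsub]
      exact measurableSet_Ioo.inter ((measurable_inv.sub measurable_const) hM'meas)
    have hdisj : ∀ a b : ℕ, 1 ≤ a → 1 ≤ b → a < b → Disjoint (S a) (S b) := by
      intro a b ha hb hab
      have hinv : (b:ℝ)⁻¹ ≤ ((a:ℝ)+1)⁻¹ := by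
        apply inv_anti₀ (by positivity)
        exact_mod_cast hab
      have h1 : S a ⊆ Set.Ioi (((a:ℝ)+1)⁻¹) := fun t ht => ((hSsub a ha) ht).1
      have h2 : S b ⊆ Set.Iic (((a:ℝ)+1)⁻¹) :=
        fun t ht => le_of_lt (lt_of_lt_of_le ((hSsub b hb) ht).2 hinv)
      exact ((Set.Iic_disjoint_Ioi (le_refl (((a:ℝ)+1)⁻¹))).symm).mono h1 h2
    -- decomposition of the integral
    have hunion : Mset (m+1) α = ⋃ a ∈ Finset.Icc 1 (α 1 - 1), S a := Mset_succ m α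
    have hInt : ∀ a : ℕ, 1 ≤ a → IntegrableOn (fun x : ℝ => ((1+y*x)^2)⁻¹) (S a) :=
      fun a ha => integrableOn_aux (S a) (hSmeas a ha) (hS01 a ha) y hy0
    have hsum : (∫ x in Mset (m+1) α, ((1+y*x)^2)⁻¹)
        = ∑ a ∈ Finset.Icc 1 (α 1 - 1), ∫ x in S a, ((1+y*x)^2)⁻¹ := by
      rw [hunion]
      apply integral_biUnion_finset
      · intro a ha
        rw [Finset.mem_Icc] at ha
        exact hSmeas a ha.1
      · intro a ha b hb hab
        simp only [Finset.coe_Icc, Set.mem_Icc] at ha hb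
        rcases lt_or_gt_of_ne hab with h | h
        · exact hdisj a b ha.1 hb.1 h
        · exact (hdisj b a hb.1 ha.1 h).symm
      · intro a ha
        rw [Finset.mem_Icc] at ha
        exact hInt a ha.1
    -- per-piece computation
    have hpiece : ∀ a : ℕ, 1 ≤ a → (∫ x in S a, ((1+y*x)^2)⁻¹)
        = (((a:ℝ)+y)^2)⁻¹ * ∫ x in M', ((1+((a:ℝ)+y)⁻¹*x)^2)⁻¹ := by
      intro a ha
      have ha' : (1:ℝ) ≤ a := by exact_mod_cast ha
      have hay : (0:ℝ) < (a:ℝ) + y := by linarith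
      have hderiv : ∀ x ∈ M', HasDerivWithinAt (fun x : ℝ => ((a:ℝ)+x)⁻¹)
          (-((((a:ℝ)+x)^2)⁻¹)) M' x := by
        intro x hx
        have hx0 := (hMsub hx).1
        have hne : (a:ℝ)+x ≠ 0 := by positivity
        have h := ((hasDerivAt_const x ((a:ℝ))).add (hasDerivAt_id x)).inv hne
        have h' : HasDerivAt (fun x : ℝ => ((a:ℝ)+x)⁻¹) (-((((a:ℝ)+x)^2)⁻¹)) x := by
          refine h.congr_deriv ?_
          simp only [Pi.add_apply, id]
          field_simp
          norm_num
        exact h'.hasDerivWithinAt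
      have hinj : Set.InjOn (fun x : ℝ => ((a:ℝ)+x)⁻¹) M' := by
        intro x hx x' hx' h
        simp only at h
        have := inv_injective h
        linarith [this]
      rw [hSdef]
      simp only
      rw [integral_image_eq_integral_abs_deriv_smul hM'meas hderiv hinj]
      rw [← integral_const_mul]
      apply setIntegral_congr_fun hM'meas
      intro x hx
      obtain ⟨hx0, hx1⟩ := hMsub hx
      have h1 : (0:ℝ) < (a:ℝ) + x := by linarith
      have h2 : (0:ℝ) < (a:ℝ) + x + y := by linarith
      simp only [smul_eq_mul, abs_neg, abs_of_nonneg (by positivity : (0:ℝ) ≤ (((a:ℝ)+x)^2)⁻¹)]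
      have e1 : (1 + y * ((a:ℝ)+x)⁻¹) = ((a:ℝ)+x+y) / ((a:ℝ)+x) := by
        field_simp
      have e2 : (1 + ((a:ℝ)+y)⁻¹ * x) = ((a:ℝ)+y+x) / ((a:ℝ)+y) := by
        field_simp
      rw [e1, e2, div_pow, div_pow]
      rw [inv_div, inv_div]
      field_simp
      ring
    -- the constant
    have hca : ∀ a : ℕ, 1 ≤ a →
        (((a:ℝ)+y)^2)⁻¹ * (1+((a:ℝ)+y)⁻¹)⁻¹ = (((a:ℝ)+y) * ((a:ℝ)+y+1))⁻¹ := by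
      intro a ha
      have ha' : (1:ℝ) ≤ a := by exact_mod_cast ha
      have hay : (0:ℝ) < (a:ℝ) + y := by linarith
      have hay1 : (0:ℝ) < (a:ℝ) + y + 1 := by linarith
      have e : (1+((a:ℝ)+y)⁻¹) = ((a:ℝ)+y+1) / ((a:ℝ)+y) := by
        field_simp
      rw [e, inv_div, mul_inv]
      field_simp
    -- per-piece bounds from the induction hypothesis
    have hbound : ∀ a : ℕ, 1 ≤ a →
        P'^2 * (((a:ℝ)+y) * ((a:ℝ)+y+1))⁻¹ ≤ (∫ x in S a, ((1+y*x)^2)⁻¹) ∧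
        (∫ x in S a, ((1+y*x)^2)⁻¹) ≤ P' * (((a:ℝ)+y) * ((a:ℝ)+y+1))⁻¹ := by
      intro a ha
      have ha' : (1:ℝ) ≤ a := by exact_mod_cast ha
      have hay : (1:ℝ) ≤ (a:ℝ) + y := by linarith
      have hay0 : (0:ℝ) < (a:ℝ) + y := by linarith
      set z : ℝ := ((a:ℝ)+y)⁻¹ with hzdef
      have hz0 : 0 ≤ z := by positivity
      have hz1 : z ≤ 1 := inv_le_one_of_one_le₀ hay
      have hih := ih α' hα' z hz0 hz1
      rw [hpiece a ha]
      constructor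
      · calc P'^2 * (((a:ℝ)+y) * ((a:ℝ)+y+1))⁻¹
            = (((a:ℝ)+y)^2)⁻¹ * (P'^2 * (1+z)⁻¹) := by
              rw [← hca a ha]; ring
          _ ≤ (((a:ℝ)+y)^2)⁻¹ * ∫ x in M', ((1+z*x)^2)⁻¹ :=
              mul_le_mul_of_nonneg_left hih.1 (by positivity)
      · calc (((a:ℝ)+y)^2)⁻¹ * ∫ x in M', ((1+z*x)^2)⁻¹
            ≤ (((a:ℝ)+y)^2)⁻¹ * (P' * (1+z)⁻¹) :=
              mul_le_mul_of_nonneg_left hih.2 (by positivity)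
          _ = P' * (((a:ℝ)+y) * ((a:ℝ)+y+1))⁻¹ := by
              rw [← hca a ha]; ring
    -- the telescoping sum
    have hcast : ((α 1 - 1 : ℕ) : ℝ) + 1 = A := by
      rw [hAdef]
      have : ((α 1 - 1 : ℕ) : ℝ) = (α 1 : ℝ) - 1 := by
        push_cast [Nat.cast_sub hA1]
        ring
      rw [this]; ring
    have htel : ∑ a ∈ Finset.Icc 1 (α 1 - 1), (((a:ℝ)+y) * ((a:ℝ)+y+1))⁻¹
        = (1+y)⁻¹ - (A+y)⁻¹ := by
      rw [telescope y hy0 (α 1 - 1), hcast]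
    -- the product split
    have hsplit : ∏ j ∈ Finset.Icc 1 (m+1), (1 - ((α j : ℝ))⁻¹) = (1 - A⁻¹) * P' := by
      rw [prod_Icc_shift (fun j => (1 - ((α j : ℝ))⁻¹)) m, hP'def, hAdef]
    -- put everything together
    constructor
    · rw [hsum, hsplit]
      calc ((1 - A⁻¹) * P')^2 * (1+y)⁻¹
          = P'^2 * ((1 - A⁻¹)^2 * (1+y)⁻¹) := by ring
        _ ≤ P'^2 * ((1+y)⁻¹ - (A+y)⁻¹) :=
            mul_le_mul_of_nonneg_left (final_low A y hA hy0 hy1) (by positivity)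
        _ = ∑ a ∈ Finset.Icc 1 (α 1 - 1), P'^2 * (((a:ℝ)+y) * ((a:ℝ)+y+1))⁻¹ := by
            rw [← htel, Finset.mul_sum]
        _ ≤ ∑ a ∈ Finset.Icc 1 (α 1 - 1), ∫ x in S a, ((1+y*x)^2)⁻¹ := by
            apply Finset.sum_le_sum
            intro a ha
            rw [Finset.mem_Icc] at ha
            exact (hbound a ha.1).1
    · rw [hsum, hsplit]
      calc ∑ a ∈ Finset.Icc 1 (α 1 - 1), ∫ x in S a, ((1+y*x)^2)⁻¹
          ≤ ∑ a ∈ Finset.Icc 1 (α 1 - 1), P' * (((a:ℝ)+y) * ((a:ℝ)+y+1))⁻¹ := by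
            apply Finset.sum_le_sum
            intro a ha
            rw [Finset.mem_Icc] at ha
            exact (hbound a ha.1).2
        _ = P' * ((1+y)⁻¹ - (A+y)⁻¹) := by rw [← htel, Finset.mul_sum]
        _ ≤ P' * ((1 - A⁻¹) * (1+y)⁻¹) :=
            mul_le_mul_of_nonneg_left (final_up A y hA hy0) hP'0
        _ = (1 - A⁻¹) * P' * (1+y)⁻¹ := by ring

end Stmt12

theorem stmt_12 (m : ℕ) (α : ℕ → ℕ) (hα : ∀ j, 1 ≤ j → j ≤ m → 0 < α j) :
    let M : Set ℝ := {t | t ∈ Set.Ioo (0:ℝ) 1 ∧ Irrational t ∧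
      ∀ j, 1 ≤ j → j ≤ m → theta j t < α j}
    ENNReal.ofReal (∏ j ∈ Finset.Icc 1 m, (1 - 1/(α j : ℝ))^2) ≤ volume M ∧
    volume M ≤ ENNReal.ofReal (∏ j ∈ Finset.Icc 1 m, (1 - 1/(α j : ℝ))) := by
  intro M
  have hMeq : M = Stmt12.Mset m α := rfl
  obtain ⟨hl, hu⟩ := Stmt12.key m α hα 0 le_rfl zero_le_one
  have hint : (∫ x in Stmt12.Mset m α, ((1+(0:ℝ)*x)^2)⁻¹)
      = (volume (Stmt12.Mset m α)).toReal := by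
    simp [Measure.real]
  rw [hint] at hl hu
  have hfin : volume (Stmt12.Mset m α) ≠ ⊤ := by
    refine ((measure_mono (Stmt12.Mset_subset m α)).trans_lt ?_).ne
    simp [Real.volume_Ioo]
  set P : ℝ := ∏ j ∈ Finset.Icc 1 m, (1 - ((α j : ℝ))⁻¹) with hP
  have hprod1 : ∏ j ∈ Finset.Icc 1 m, (1 - 1/(α j : ℝ)) = P := by
    simp [one_div, hP]
  have hprod2 : ∏ j ∈ Finset.Icc 1 m, (1 - 1/(α j : ℝ))^2 = P^2 := by
    rw [hP, ← Finset.prod_pow]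
    simp [one_div]
  rw [hMeq, hprod1, hprod2]
  constructor
  · apply ENNReal.ofReal_le_of_le_toReal
    simpa using hl
  · rw [← ENNReal.ofReal_toReal hfin]
    apply ENNReal.ofReal_le_ofReal
    simpa using hu
end

section
/- For an irrational t ∈ (0,1) define the sequence t₀ = t, t_j = 1/t_{j-1} - ⌊1/t_{j-1}⌋, and given n ∈ ℕ define n₀ = n, n_j = ⌊t_{j-1}·n_{j-1}⌋. Then for every index j with 1 ≤ j and n_{j+1} > 0 (i.e., before the sequence terminates), n_{j+1} < n_{j-1}/2. -/
theorem stmt_13 (t : ℝ) (ht : t ∈ Set.Ioo (0:ℝ) 1) (hirr : Irrational t)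
    (n : ℕ)
    (ts : ℕ → ℝ) (hts0 : ts 0 = t)
    (htsrec : ∀ j : ℕ, ts (j+1) = 1 / ts j - ⌊1 / ts j⌋)
    (ns : ℕ → ℕ) (hns0 : ns 0 = n)
    (hnsrec : ∀ j : ℕ, ns (j+1) = ⌊ts j * ns j⌋₊) :
    ∀ j : ℕ, 1 ≤ j → 0 < ns (j+1) → (ns (j+1) : ℝ) < (ns (j-1) : ℝ) / 2 := by
  -- All ts j are irrational and in (0,1)
  have key : ∀ j : ℕ, Irrational (ts j) ∧ ts j ∈ Set.Ioo (0:ℝ) 1 := by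
    intro j
    induction j with
    | zero => exact ⟨hts0 ▸ hirr, hts0 ▸ ht⟩
    | succ k ih =>
      obtain ⟨hi, h0, h1⟩ := ih
      have hne : ts k ≠ 0 := ne_of_gt h0
      have hinv : Irrational (1 / ts k) := by
        rw [one_div]; exact hi.inv
      have hfr : ts (k+1) = Int.fract (1 / ts k) := by
        rw [htsrec k, Int.fract]
      have hi' : Irrational (ts (k+1)) := by
        rw [htsrec k]; exact hinv.sub_intCast _
      refine ⟨hi', ?_, ?_⟩
      · rw [hfr]
        rcases lt_or_eq_of_le (Int.fract_nonneg (1 / ts k)) with h | h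
        · exact h
        · exfalso
          have heq : (1 / ts k) = (⌊1 / ts k⌋ : ℝ) := by
            have := Int.fract_add_floor (1 / ts k)
            linarith [h.symm]
          exact (hinv.ne_int ⌊1 / ts k⌋) heq
      · rw [hfr]; exact Int.fract_lt_one _
  -- key half lemma
  have half : ∀ j : ℕ, ts j * ts (j+1) < 1/2 := by
    intro j
    obtain ⟨hi, h0, h1⟩ := key j
    obtain ⟨hi', h0', h1'⟩ := key (j+1)
    rcases lt_or_ge (ts j) (1/2) with h | h
    · nlinarith
    · -- ts j ≥ 1/2, so ⌊1/ts j⌋ = 1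
      have hne : ts j ≠ 1/2 := fun he => by
        have : Irrational ((1:ℝ)/2) := he ▸ hi
        exact this ⟨1/2, by norm_num⟩
      have hgt : 1/2 < ts j := lt_of_le_of_ne h (Ne.symm hne)
      have h1le : (1:ℝ) < 1 / ts j := by
        rw [lt_div_iff₀ h0]; linarith
      have h2lt : 1 / ts j < 2 := by
        rw [div_lt_iff₀ h0]; linarith
      have hfl : ⌊1 / ts j⌋ = 1 := by
        apply Int.floor_eq_iff.mpr
        constructor <;> push_cast <;> linarith
      have : ts (j+1) = 1 / ts j - 1 := by rw [htsrec j, hfl]; norm_num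
      rw [this]
      have : ts j * (1 / ts j - 1) = 1 - ts j := by
        field_simp
      rw [this]; linarith
  intro j hj hpos
  obtain ⟨k, rfl⟩ : ∃ k, j = k + 1 := ⟨j - 1, (Nat.succ_pred_eq_of_pos hj).symm⟩
  simp only [Nat.add_sub_cancel]
  obtain ⟨_, hk0, hk1⟩ := key k
  obtain ⟨_, hk0', hk1'⟩ := key (k+1)
  -- ns (k+2) ≤ ts (k+1) * ns (k+1) ≤ ts (k+1) * ts k * ns k
  have hA : (ns (k+1+1) : ℝ) ≤ ts (k+1) * ns (k+1) := by
    rw [hnsrec (k+1)]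
    exact Nat.floor_le (by positivity)
  have hB : (ns (k+1) : ℝ) ≤ ts k * ns k := by
    rw [hnsrec k]
    exact Nat.floor_le (by positivity)
  have hnk : 0 < (ns k : ℝ) := by
    by_contra hc
    push_neg at hc
    have : (ns k : ℝ) = 0 := le_antisymm hc (by positivity)
    have h1 : ns (k+1) = 0 := by
      rw [hnsrec k]
      simp [this]
    have h2 : ns (k+1+1) = 0 := by
      rw [hnsrec (k+1), h1]
      simp
    omega
  have hh := half k
  calc (ns (k+1+1) : ℝ) ≤ ts (k+1) * ns (k+1) := hA
    _ ≤ ts (k+1) * (ts k * ns k) := by nlinarith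
    _ < (ns k : ℝ) / 2 := by nlinarith
end

section
/- For an irrational t ∈ (0,1) and integer n ≥ 8, let j' be the first index with n_{j'} = 0 in the sequence n₀ = n, n_j = ⌊t_{j-1}·n_{j-1}⌋, where t₀ = t and t_j = 1/t_{j-1} - ⌊1/t_{j-1}⌋. Then j' ≤ 4·log n. -/
theorem stmt_14 (t : ℝ) (ht : t ∈ Set.Ioo (0:ℝ) 1) (hirr : Irrational t)
    (n : ℕ) (hn : 8 ≤ n)
    (ts : ℕ → ℝ) (hts0 : ts 0 = t)
    (htsrec : ∀ j : ℕ, ts (j+1) = 1 / ts j - ⌊1 / ts j⌋)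
    (ns : ℕ → ℕ) (hns0 : ns 0 = n)
    (hnsrec : ∀ j : ℕ, ns (j+1) = ⌊ts j * ns j⌋₊)
    (j' : ℕ) (hj'zero : ns j' = 0) (hj'least : ∀ i, i < j' → ns i ≠ 0) :
    (j' : ℝ) ≤ 4 * Real.log n := by
  -- basic properties of ts
  have hprop : ∀ j, 0 < ts j ∧ ts j < 1 ∧ Irrational (ts j) := by
    intro j
    induction j with
    | zero => exact ⟨hts0 ▸ ht.1, hts0 ▸ ht.2, hts0 ▸ hirr⟩
    | succ j ih =>
      obtain ⟨hpos, hlt1, hirrj⟩ := ih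
      have hinv : Irrational (1 / ts j) := by
        rw [one_div]; exact hirrj.inv
      have heq : ts (j+1) = Int.fract (1 / ts j) := by
        rw [htsrec j, Int.fract]
      refine ⟨?_, ?_, ?_⟩
      · rw [heq]
        rw [Int.fract_pos]
        intro h
        exact hinv ⟨⌊1 / ts j⌋, by rw [h]; simp⟩
      · rw [heq]; exact Int.fract_lt_one _
      · rw [htsrec j]
        exact hinv.sub_intCast _
  -- product bound
  have hprod : ∀ j, ts j * ts (j+1) ≤ 1/2 := by
    intro j
    obtain ⟨hpos, hlt1, hirrj⟩ := hprop j
    set x := ts j with hx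
    set a : ℤ := ⌊1 / x⌋ with ha
    have hx1 : 1 < 1 / x := by rw [lt_div_iff₀ hpos]; linarith
    have ha1 : (1:ℤ) ≤ a := Int.le_floor.mpr (by exact_mod_cast hx1.le)
    have hub : 1 / x < (a:ℝ) + 1 := Int.lt_floor_add_one _
    have hax : 1 < ((a:ℝ) + 1) * x := by
      rw [div_lt_iff₀ hpos] at hub
      linarith
    have heq : x * ts (j+1) = 1 - (a:ℝ) * x := by
      rw [htsrec j, ← ha, ← hx]
      field_simp
    rw [heq]
    have ha1' : (1:ℝ) ≤ (a:ℝ) := by exact_mod_cast ha1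
    nlinarith
  -- halving over two steps
  have hkey : ∀ j, 2 * ns (j+2) ≤ ns j := by
    intro j
    obtain ⟨hp0, hl0, _⟩ := hprop j
    obtain ⟨hp1, hl1, _⟩ := hprop (j+1)
    have h1 : (ns (j+1) : ℝ) ≤ ts j * ns j := by
      rw [hnsrec j]
      exact Nat.floor_le (by positivity)
    have h2 : (ns (j+2) : ℝ) ≤ ts (j+1) * ns (j+1) := by
      rw [hnsrec (j+1)]
      exact Nat.floor_le (by positivity)
    have h3 : (ns (j+2) : ℝ) ≤ (ts j * ts (j+1)) * ns j := by
      calc (ns (j+2) : ℝ) ≤ ts (j+1) * ns (j+1) := h2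
        _ ≤ ts (j+1) * (ts j * ns j) := by
            exact mul_le_mul_of_nonneg_left h1 hp1.le
        _ = (ts j * ts (j+1)) * ns j := by ring
    have h4 : (2 * ns (j+2) : ℝ) ≤ (ns j : ℝ) := by
      have hnn : (0:ℝ) ≤ (ns j : ℝ) := Nat.cast_nonneg _
      have := hprod j
      nlinarith
    exact_mod_cast h4
  -- power bound
  have hpow : ∀ k, ns (2*k) * 2^k ≤ n := by
    intro k
    induction k with
    | zero => simp [hns0]
    | succ k ih =>
      have h2 : 2*(k+1) = 2*k + 2 := by ring
      calc ns (2*(k+1)) * 2^(k+1) = (2 * ns (2*k+2)) * 2^k := by rw [h2]; ring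
        _ ≤ ns (2*k) * 2^k := Nat.mul_le_mul_right _ (hkey (2*k))
        _ ≤ n := ih
  have hj'pos : 1 ≤ j' := by
    rcases Nat.eq_zero_or_pos j' with h | h
    · rw [h, hns0] at hj'zero; omega
    · exact h
  set k := (j' - 1) / 2 with hk
  have hdm := Nat.div_add_mod (j' - 1) 2
  have h2k : 2*k < j' := by omega
  have hj'le : j' ≤ 2*k + 2 := by omega
  have hns2k : 1 ≤ ns (2*k) := Nat.one_le_iff_ne_zero.mpr (hj'least _ h2k)
  have h2kn : 2^k ≤ n := le_trans (Nat.le_mul_of_pos_left _ hns2k) (hpow k)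
  have hklog : (k:ℝ) * Real.log 2 ≤ Real.log n := by
    calc (k:ℝ) * Real.log 2 = Real.log ((2:ℝ)^k) := by rw [Real.log_pow]
      _ ≤ Real.log n := by
          apply Real.log_le_log (by positivity)
          exact_mod_cast h2kn
  have hlogn : 3 * Real.log 2 ≤ Real.log n := by
    have h8 : Real.log 8 ≤ Real.log n := by
      apply Real.log_le_log (by norm_num)
      exact_mod_cast hn
    have : Real.log 8 = 3 * Real.log 2 := by
      rw [show (8:ℝ) = 2^3 by norm_num, Real.log_pow]; norm_num
    linarith
  have hL : (0.6931:ℝ) < Real.log 2 := by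
    have := Real.log_two_gt_d9
    linarith
  have hjk : (j':ℝ) ≤ 2*(k:ℝ) + 2 := by exact_mod_cast hj'le
  have hk0 : (0:ℝ) ≤ (k:ℝ) := Nat.cast_nonneg _
  nlinarith [mul_nonneg hk0 (by linarith : (0:ℝ) ≤ Real.log 2), mul_le_mul_of_nonneg_left hlogn (by norm_num : (0:ℝ) ≤ 4)]
end

section
/- Let Θ : [1,∞) → [1,∞) be monotonically increasing with Θ(n) → ∞. For n ∈ ℕ set m = ⌊4·log n⌋ and M_n = { t ∈ (0,1) \ ℚ : ϑ_j(t) < 1 + ⌊Θ(n)·log n⌋ for all j = 1,…,m }, where ϑ_j(t) are the complete quotients of t. Then the Lebesgue measure |M_n| → 1 as n → ∞. -/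
open MeasureTheory Filter
open scoped ENNReal NNReal

namespace Stmt17Aux

open Set

/-- The Gauss map. -/
noncomputable def G : ℝ → ℝ := fun t => Int.fract t⁻¹

lemma measurable_G : Measurable G := measurable_fract.comp measurable_inv

lemma measurable_iterG (j : ℕ) : Measurable (G^[j]) := by
  induction j with
  | zero => simpa using measurable_id
  | succ j ih => rw [Function.iterate_succ]; exact ih.comp measurable_G

/-- The (unnormalized) Gauss density. -/
noncomputable def gdens : ℝ → ℝ≥0∞ :=
  (Set.Ioo (0:ℝ) 1).indicator (fun x => ENNReal.ofReal (1+x)⁻¹)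

lemma measurable_gdens : Measurable gdens :=
  (Measurable.ennreal_ofReal (measurable_const.add measurable_id).inv).indicator
    measurableSet_Ioo

/-- The (unnormalized) Gauss measure. -/
noncomputable def gmu : Measure ℝ := volume.withDensity gdens

lemma gmu_apply {s : Set ℝ} (hs : MeasurableSet s) : gmu s = ∫⁻ x in s, gdens x :=
  withDensity_apply _ hs

lemma gmu_inter_Ioo {s : Set ℝ} (hs : MeasurableSet s) :
    gmu s = gmu (s ∩ Set.Ioo 0 1) := by
  have h1 : ∫⁻ x in s, gdens x = ∫⁻ x, s.indicator gdens x := (lintegral_indicator hs gdens).symm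
  have h2 : ∫⁻ x in s ∩ Set.Ioo 0 1, gdens x = ∫⁻ x, (s ∩ Set.Ioo 0 1).indicator gdens x :=
    (lintegral_indicator (hs.inter measurableSet_Ioo) gdens).symm
  rw [gmu_apply hs, gmu_apply (hs.inter measurableSet_Ioo), h1, h2]
  congr 1
  ext x
  simp only [gdens, Set.indicator_indicator]
  rw [Set.inter_assoc, Set.inter_self]

lemma gmu_null {s : Set ℝ} (hs : volume s = 0) : gmu s = 0 :=
  withDensity_absolutelyContinuous volume gdens hs

/-- the k-th inverse branch of the Gauss map -/
noncomputable def br (k : ℕ) : ℝ → ℝ := fun x => ((k:ℝ)+1+x)⁻¹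

lemma br_injective (k : ℕ) : Function.Injective (br k) := by
  intro x y hxy
  have := inv_injective hxy
  linarith [this]

lemma br_measurableSet_image (k : ℕ) {B : Set ℝ} (hB : MeasurableSet B) :
    MeasurableSet (br k '' B) := by
  have hm : Measurable (br k) := (measurable_const.add measurable_id).inv
  exact (hm.measurableEmbedding (br_injective k)).measurableSet_image.2 hB

lemma br_mem_Ioo (k : ℕ) {x : ℝ} (hx : x ∈ Set.Ioo (0:ℝ) 1) : br k x ∈ Set.Ioo (0:ℝ) 1 := by
  have hk : (0:ℝ) ≤ (k:ℝ) := Nat.cast_nonneg k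
  have h1 : (1:ℝ) < (k:ℝ)+1+x := by
    have := hx.1; linarith
  have h0 : (0:ℝ) < (k:ℝ)+1+x := by linarith
  constructor
  · show (0:ℝ) < ((k:ℝ)+1+x)⁻¹
    positivity
  · show ((k:ℝ)+1+x)⁻¹ < 1
    rw [inv_lt_one_iff₀]
    right; exact h1

/-- telescoping sequence -/
noncomputable def tf (x : ℝ) (j : ℕ) : ℝ := ((j:ℝ)+1+x)⁻¹

lemma tf_nonneg {x : ℝ} (hx : 0 ≤ x) (j : ℕ) : 0 ≤ tf x j := by
  unfold tf
  have : (0:ℝ) ≤ (j:ℝ) := Nat.cast_nonneg j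
  positivity

lemma tf_antitone_succ {x : ℝ} (hx : 0 ≤ x) (j : ℕ) : tf x (j+1) ≤ tf x j := by
  unfold tf
  have h0 : (0:ℝ) < (j:ℝ)+1+x := by have := Nat.cast_nonneg (α := ℝ) j; linarith
  apply inv_anti₀ h0
  push_cast
  linarith

lemma tf_tendsto {x : ℝ} (hx : 0 ≤ x) : Tendsto (tf x) atTop (nhds 0) := by
  have h1 : Tendsto (fun j : ℕ => ((j:ℝ)+1+x)) atTop atTop := by
    have := tendsto_natCast_atTop_atTop (R := ℝ)
    have := Filter.tendsto_atTop_add_const_right atTop (1+x) this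
    simpa [add_assoc] using this
  exact h1.inv_tendsto_atTop

lemma tf_summable {x : ℝ} (hx : 0 ≤ x) :
    Summable (fun j : ℕ => tf x j - tf x (j+1)) := by
  apply summable_of_sum_range_le (c := tf x 0)
    (fun j => by linarith [tf_antitone_succ hx j])
  intro n
  rw [Finset.sum_range_sub' (tf x)]
  linarith [tf_nonneg hx n]

lemma tf_tsum {x : ℝ} (hx : 0 ≤ x) :
    ∑' j : ℕ, (tf x j - tf x (j+1)) = (1+x)⁻¹ := by
  have hsum := tf_summable hx
  have h1 : Tendsto (fun n => ∑ i ∈ Finset.range n, (tf x i - tf x (i+1))) atTop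
      (nhds (∑' j : ℕ, (tf x j - tf x (j+1)))) := hsum.hasSum.tendsto_sum_nat
  have h2 : Tendsto (fun n => ∑ i ∈ Finset.range n, (tf x i - tf x (i+1))) atTop
      (nhds (tf x 0)) := by
    simp only [Finset.sum_range_sub' (tf x)]
    simpa using tendsto_const_nhds.sub (tf_tendsto hx)
  have := tendsto_nhds_unique h1 h2
  rw [this]
  unfold tf
  norm_num

lemma tf_tsum_ennreal {x : ℝ} (hx : 0 ≤ x) :
    ∑' j : ℕ, ENNReal.ofReal (tf x j - tf x (j+1)) = ENNReal.ofReal (1+x)⁻¹ := by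
  rw [← ENNReal.ofReal_tsum_of_nonneg (fun j => by linarith [tf_antitone_succ hx j])
    (tf_summable hx), tf_tsum hx]

lemma branch_gmu (k : ℕ) {B : Set ℝ} (hB : MeasurableSet B) (hB1 : B ⊆ Set.Ioo 0 1) :
    gmu (br k '' B) = ∫⁻ x in B, ENNReal.ofReal (tf x k - tf x (k+1)) := by
  have hder : ∀ x ∈ B, HasDerivWithinAt (br k) (-(1:ℝ) / ((k:ℝ)+1+x)^2) B x := by
    intro x hx
    have hx0 : (0:ℝ) < (k:ℝ)+1+x := by
      have := (hB1 hx).1; have := Nat.cast_nonneg (α := ℝ) k; linarith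
    have h1 : HasDerivAt (fun y : ℝ => ((k:ℝ)+1+y)) 1 x := by
      simpa using (hasDerivAt_id x).const_add ((k:ℝ)+1)
    exact ((h1.inv hx0.ne').hasDerivWithinAt)
  rw [gmu_apply (br_measurableSet_image k hB),
    lintegral_image_eq_lintegral_abs_det_fderiv_mul volume hB
      (fun x hx => (hder x hx).hasFDerivWithinAt) ((br_injective k).injOn)]
  apply setLIntegral_congr_fun hB
  intro x
  intro hx
  dsimp only
  have hx01 := hB1 hx
  have hx0 : (0:ℝ) < (k:ℝ)+1+x := by
    have := hx01.1; have := Nat.cast_nonneg (α := ℝ) k; linarith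
  have hbr : br k x ∈ Set.Ioo (0:ℝ) 1 := br_mem_Ioo k hx01
  rw [ContinuousLinearMap.det_toSpanSingleton]
  have hgd : gdens (br k x) = ENNReal.ofReal (1 + br k x)⁻¹ := by
    unfold gdens
    rw [Set.indicator_of_mem hbr]
  rw [hgd, ← ENNReal.ofReal_mul (abs_nonneg _)]
  congr 1
  have habs : |(-(1:ℝ) / ((k:ℝ)+1+x)^2)| = (((k:ℝ)+1+x)^2)⁻¹ := by
    rw [abs_div, abs_neg, abs_one, abs_of_pos (by positivity : (0:ℝ) < ((k:ℝ)+1+x)^2)]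
    exact one_div _
  rw [habs]
  show (((k:ℝ)+1+x)^2)⁻¹ * (1 + ((k:ℝ)+1+x)⁻¹)⁻¹ = tf x k - tf x (k+1)
  unfold tf
  have hne : ((k:ℝ)+1+x) ≠ 0 := hx0.ne'
  have hne2 : ((k:ℝ)+1+x) + 1 ≠ 0 := by intro h; linarith
  have hne3 : ((k:ℝ)+1+1+x) ≠ 0 := by intro h; linarith
  push_cast
  field_simp
  ring

/-- The set of reals whose inverse is an integer. -/
def N : Set ℝ := {t | ∃ m : ℤ, t⁻¹ = (m:ℝ)}

lemma N_countable : N.Countable := by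
  have h : N ⊆ insert (0:ℝ) (Set.range fun m : ℤ => ((m:ℝ))⁻¹) := by
    rintro t ⟨m, hm⟩
    rcases eq_or_ne t 0 with h | h
    · exact Set.mem_insert_iff.2 (Or.inl h)
    · refine Set.mem_insert_iff.2 (Or.inr ⟨m, ?_⟩)
      show ((m:ℝ))⁻¹ = t
      rw [← hm, inv_inv]
  exact ((Set.countable_range _).insert 0).mono h

lemma key_seteq {A : Set ℝ} :
    (G ⁻¹' A ∩ Set.Ioo 0 1) \ N = ⋃ k : ℕ, br k '' (A ∩ Set.Ioo 0 1) := by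
  ext t
  constructor
  · rintro ⟨⟨htA, ht01⟩, htN⟩
    have ht0 : (0:ℝ) < t := ht01.1
    have hinv1 : 1 < t⁻¹ := (one_lt_inv_iff₀).2 ⟨ht0, ht01.2⟩
    set z : ℤ := ⌊t⁻¹⌋ with hz
    have hz1 : 1 ≤ z := by
      rw [hz]; exact Int.le_floor.2 (by exact_mod_cast hinv1.le)
    set x : ℝ := Int.fract t⁻¹ with hxdef
    have hx0 : 0 < x := by
      rcases lt_or_eq_of_le (Int.fract_nonneg t⁻¹) with h | h
      · exact h
      · exfalso
        apply htN
        refine ⟨z, ?_⟩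
        have h2 := Int.floor_add_fract t⁻¹
        rw [← h] at h2
        rw [hz]
        linarith [h2]
    have hx1 : x < 1 := Int.fract_lt_one _
    have hxA : x ∈ A := htA
    refine Set.mem_iUnion.2 ⟨(z-1).toNat, x, ⟨hxA, hx0, hx1⟩, ?_⟩
    have hcast : (((z-1).toNat : ℝ)) = (z:ℝ) - 1 := by
      have : ((z-1).toNat : ℤ) = z - 1 := Int.toNat_of_nonneg (by omega)
      exact_mod_cast congrArg (fun w : ℤ => (w:ℝ)) this
    unfold br
    rw [hcast]
    have hfl := Int.floor_add_fract t⁻¹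
    rw [← hxdef, ← hz] at hfl
    have : (z:ℝ) - 1 + 1 + x = t⁻¹ := by push_cast; push_cast at hfl; linarith
    rw [this, inv_inv]
  · intro ht
    rcases Set.mem_iUnion.1 ht with ⟨k, x, ⟨hxA, hx01⟩, rfl⟩
    have hk0 : (0:ℝ) ≤ (k:ℝ) := Nat.cast_nonneg k
    have hsum_pos : (0:ℝ) < (k:ℝ)+1+x := by have := hx01.1; linarith
    have hinv : (br k x)⁻¹ = (k:ℝ)+1+x := by unfold br; rw [inv_inv]
    refine ⟨⟨?_, br_mem_Ioo k hx01⟩, ?_⟩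
    · show Int.fract (br k x)⁻¹ ∈ A
      rw [hinv]
      have : ((k:ℝ)+1) = ((k+1 : ℤ) : ℝ) := by push_cast; ring
      rw [this, Int.fract_intCast_add, Int.fract_eq_self.2 ⟨hx01.1.le, hx01.2⟩]
      exact hxA
    · rintro ⟨m, hm⟩
      rw [hinv] at hm
      have h1 : (0:ℝ) < (m:ℝ) - ((k:ℝ)+1) := by linarith [hx01.1]
      have h2 : (m:ℝ) - ((k:ℝ)+1) < 1 := by linarith [hx01.2]
      have h1' : ((k:ℤ)+1) < m := by exact_mod_cast (by push_cast; linarith : ((k:ℝ)+1) < (m:ℝ))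
      have h2' : (m:ℤ) < (k:ℤ)+1+1 := by exact_mod_cast (by push_cast; linarith : (m:ℝ) < (k:ℝ)+1+1)
      omega

lemma br_disjoint : Pairwise (Function.onFun Disjoint
    (fun k : ℕ => br k '' (Set.Ioo (0:ℝ) 1))) := by
  intro k l hkl
  rw [Function.onFun, Set.disjoint_left]
  rintro t ⟨x, hx, rfl⟩ ⟨y, hy, hxy⟩
  apply hkl
  have := inv_injective hxy
  have h1 : (k:ℝ) < (l:ℝ) + 1 := by linarith [hx.1, hx.2, hy.1, hy.2]
  have h2 : (l:ℝ) < (k:ℝ) + 1 := by linarith [hx.1, hx.2, hy.1, hy.2]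
  have h1' : k < l + 1 := by exact_mod_cast (by push_cast at h1 ⊢; linarith : (k:ℝ) < ((l+1:ℕ):ℝ))
  have h2' : l < k + 1 := by exact_mod_cast (by push_cast at h2 ⊢; linarith : (l:ℝ) < ((k+1:ℕ):ℝ))
  omega

/-- Invariance of the Gauss measure under the Gauss map. -/
lemma gmu_preimage_G {A : Set ℝ} (hA : MeasurableSet A) :
    gmu (G ⁻¹' A ∩ Set.Ioo 0 1) = gmu (A ∩ Set.Ioo 0 1) := by
  set B := A ∩ Set.Ioo (0:ℝ) 1 with hBdef
  have hB : MeasurableSet B := hA.inter measurableSet_Ioo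
  have hB1 : B ⊆ Set.Ioo 0 1 := Set.inter_subset_right
  have hgN : gmu N = 0 := gmu_null (N_countable.measure_zero _)
  have hmeasPre : MeasurableSet (G ⁻¹' A ∩ Set.Ioo (0:ℝ) 1) :=
    (measurable_G hA).inter measurableSet_Ioo
  calc gmu (G ⁻¹' A ∩ Set.Ioo 0 1)
      = gmu ((G ⁻¹' A ∩ Set.Ioo 0 1) \ N) := (measure_diff_null hgN).symm
    _ = gmu (⋃ k : ℕ, br k '' B) := by rw [key_seteq]
    _ = ∑' k : ℕ, gmu (br k '' B) := by
        apply measure_iUnion ?_ (fun k => br_measurableSet_image k hB)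
        intro k l hkl
        exact (br_disjoint hkl).mono (Set.image_mono hB1) (Set.image_mono hB1)
    _ = ∑' k : ℕ, ∫⁻ x in B, ENNReal.ofReal (tf x k - tf x (k+1)) := by
        congr 1; ext k; exact branch_gmu k hB hB1
    _ = ∫⁻ x in B, ∑' k : ℕ, ENNReal.ofReal (tf x k - tf x (k+1)) := by
        refine (lintegral_tsum fun k => ?_).symm
        apply Measurable.aemeasurable
        apply Measurable.ennreal_ofReal
        apply Measurable.sub <;>
          exact (measurable_const.add measurable_id).inv
    _ = ∫⁻ x in B, gdens x := by
        apply setLIntegral_congr_fun hB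
        intro x hx
        dsimp only
        rw [tf_tsum_ennreal (hB1 hx).1.le]
        unfold gdens
        rw [Set.indicator_of_mem (hB1 hx)]
    _ = gmu B := (gmu_apply hB).symm

lemma gmu_preimage_iterG (j : ℕ) {A : Set ℝ} (hA : MeasurableSet A) :
    gmu ((G^[j]) ⁻¹' A ∩ Set.Ioo 0 1) = gmu (A ∩ Set.Ioo 0 1) := by
  induction j generalizing A with
  | zero => simp
  | succ j ih =>
    rw [Function.iterate_succ, Set.preimage_comp]
    rw [gmu_preimage_G ((measurable_iterG j) hA)]
    exact ih hA

lemma vol_le_two_gmu {s : Set ℝ} (hs : MeasurableSet s) (h1 : s ⊆ Set.Ioo 0 1) :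
    volume s ≤ 2 * gmu s := by
  have hlow : (2:ℝ≥0∞)⁻¹ * volume s ≤ gmu s := by
    rw [gmu_apply hs]
    calc (2:ℝ≥0∞)⁻¹ * volume s = ∫⁻ _ in s, (2:ℝ≥0∞)⁻¹ := by
          rw [setLIntegral_const]
      _ ≤ ∫⁻ x in s, gdens x := by
          apply setLIntegral_mono measurable_gdens
          intro x hx
          have hx01 := h1 hx
          unfold gdens
          rw [Set.indicator_of_mem hx01]
          have : ((2:ℝ))⁻¹ ≤ (1+x)⁻¹ :=
            inv_anti₀ (by linarith [hx01.1]) (by linarith [hx01.2])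
          calc (2:ℝ≥0∞)⁻¹ = ENNReal.ofReal ((2:ℝ))⁻¹ := by
                rw [ENNReal.ofReal_inv_of_pos (by norm_num)]
                norm_num
            _ ≤ ENNReal.ofReal (1+x)⁻¹ := ENNReal.ofReal_le_ofReal this
  calc volume s = 2 * ((2:ℝ≥0∞)⁻¹ * volume s) := by
        rw [← mul_assoc, ENNReal.mul_inv_cancel (by norm_num) (by norm_num), one_mul]
    _ ≤ 2 * gmu s := by exact mul_le_mul_right hlow 2

lemma gmu_le_vol {A : Set ℝ} (hA : MeasurableSet A) :
    gmu A ≤ volume (A ∩ Set.Ioo 0 1) := by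
  rw [gmu_inter_Ioo hA, gmu_apply (hA.inter measurableSet_Ioo)]
  calc ∫⁻ x in A ∩ Set.Ioo 0 1, gdens x
      ≤ ∫⁻ _ in A ∩ Set.Ioo 0 1, 1 := by
        apply setLIntegral_mono measurable_const
        intro x hx
        unfold gdens
        rw [Set.indicator_of_mem hx.2]
        apply ENNReal.ofReal_le_one.2
        rw [inv_le_one_iff₀]
        right; linarith [hx.2.1]
    _ = volume (A ∩ Set.Ioo 0 1) := by rw [setLIntegral_const, one_mul]

lemma irrational_fract {u : ℝ} (hu : Irrational u) : Irrational (Int.fract u) := by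
  rw [← Int.self_sub_floor]
  exact hu.sub_intCast _

lemma iterG_mem (t : ℝ) (ht : Irrational t) (h01 : t ∈ Set.Ioo (0:ℝ) 1) (j : ℕ) :
    Irrational (G^[j] t) ∧ G^[j] t ∈ Set.Ioo (0:ℝ) 1 := by
  induction j with
  | zero => exact ⟨ht, h01⟩
  | succ j ih =>
    obtain ⟨hirr, hmem⟩ := ih
    rw [Function.iterate_succ_apply']
    set u := G^[j] t
    have hu_inv : Irrational u⁻¹ := hirr.inv
    have hGirr : Irrational (G u) := irrational_fract hu_inv
    refine ⟨hGirr, ?_, Int.fract_lt_one _⟩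
    rcases lt_or_eq_of_le (Int.fract_nonneg u⁻¹) with h | h
    · exact h
    · exfalso
      apply Rat.not_irrational 0
      have : G u = 0 := h.symm
      rw [this] at hGirr
      simpa using hGirr
  
lemma theta_eq (t : ℝ) (ht : Irrational t) (h01 : t ∈ Set.Ioo (0:ℝ) 1) (j : ℕ) :
    theta (j+1) t = (G^[j] t)⁻¹ := by
  induction j with
  | zero =>
    show 1 / Int.fract (theta 0 t) = _
    have : theta 0 t = t := rfl
    rw [this, Int.fract_eq_self.2 ⟨h01.1.le, h01.2⟩]
    simp [one_div]
  | succ j ih =>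
    show 1 / Int.fract (theta (j+1) t) = _
    rw [ih, Function.iterate_succ_apply']
    rw [one_div]
    rfl

end Stmt17Aux

open Stmt17Aux in
theorem stmt_17 (Θ : ℝ → ℝ)
    (hΘ1 : ∀ x : ℝ, 1 ≤ x → 1 ≤ Θ x)
    (hΘmono : MonotoneOn Θ (Set.Ici (1:ℝ)))
    (hΘtop : Tendsto Θ atTop atTop) :
    Tendsto (fun n : ℕ =>
      (volume {t : ℝ | t ∈ Set.Ioo (0:ℝ) 1 ∧ Irrational t ∧
        ∀ j, 1 ≤ j → j ≤ ⌊4 * Real.log n⌋₊ →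
          theta j t < 1 + ⌊Θ n * Real.log n⌋₊}).toReal)
      atTop (nhds 1) := by
  set S : ℕ → Set ℝ := fun n => {t : ℝ | t ∈ Set.Ioo (0:ℝ) 1 ∧ Irrational t ∧
        ∀ j, 1 ≤ j → j ≤ ⌊4 * Real.log n⌋₊ →
          theta j t < 1 + ⌊Θ n * Real.log n⌋₊} with hSdef
  have hSsub : ∀ n, S n ⊆ Set.Ioo (0:ℝ) 1 := fun n t ht => ht.1
  have hvol01 : volume (Set.Ioo (0:ℝ) 1) = 1 := by
    rw [Real.volume_Ioo]; norm_num
  have hSfin : ∀ n, volume (S n) ≤ 1 := fun n => hvol01 ▸ measure_mono (hSsub n)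
  have upper : ∀ n : ℕ, (volume (S n)).toReal ≤ 1 := by
    intro n
    have := ENNReal.toReal_mono (by norm_num) (hSfin n)
    simpa using this
  have key : ∀ n : ℕ, 2 ≤ n → 1 - 8 / Θ n ≤ (volume (S n)).toReal := by
    intro n hn2
    have hn1 : (1:ℝ) ≤ (n:ℝ) := by exact_mod_cast Nat.one_le_of_lt hn2
    have hlog : 0 < Real.log n := Real.log_pos (by exact_mod_cast hn2)
    have hΘn : 1 ≤ Θ n := hΘ1 n hn1
    have hΘpos : 0 < Θ n := by linarith
    have hx0 : 0 < Θ n * Real.log n := mul_pos hΘpos hlog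
    set m : ℕ := ⌊4 * Real.log n⌋₊ with hmdef
    set a : ℕ := 1 + ⌊Θ n * Real.log n⌋₊ with hadef
    have ha1 : (1:ℝ) ≤ (a:ℝ) := by
      have : 1 ≤ a := Nat.le_add_right 1 _
      exact_mod_cast this
    set ε : ℝ := ((a:ℝ))⁻¹ with hεdef
    have hεpos : 0 < ε := by positivity
    have hax : Θ n * Real.log n < (a:ℝ) := by
      have := Nat.lt_floor_add_one (Θ n * Real.log n)
      rw [hadef]; push_cast; linarith
    have hεlt : ε < (Θ n * Real.log n)⁻¹ := by
      rw [hεdef]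
      exact inv_strictAnti₀ hx0 hax
    set Bad : ℕ → Set ℝ := fun j => (G^[j]) ⁻¹' (Set.Ioc 0 ε) ∩ Set.Ioo 0 1 with hBaddef
    have hBadMeas : ∀ j, MeasurableSet (Bad j) := fun j =>
      ((measurable_iterG j) measurableSet_Ioc).inter measurableSet_Ioo
    have hBadvol : ∀ j, volume (Bad j) ≤ ENNReal.ofReal (2*ε) := by
      intro j
      calc volume (Bad j) ≤ 2 * gmu (Bad j) :=
            vol_le_two_gmu (hBadMeas j) Set.inter_subset_right
        _ = 2 * gmu (Set.Ioc 0 ε ∩ Set.Ioo 0 1) := by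
            rw [gmu_preimage_iterG j measurableSet_Ioc]
        _ ≤ 2 * volume ((Set.Ioc 0 ε ∩ Set.Ioo 0 1) ∩ Set.Ioo 0 1) :=
            mul_le_mul_right (gmu_le_vol (measurableSet_Ioc.inter measurableSet_Ioo)) 2
        _ ≤ 2 * volume (Set.Ioc 0 ε) := by
            apply mul_le_mul_right
            apply measure_mono
            intro x hx
            exact hx.1.1
        _ = ENNReal.ofReal (2*ε) := by
            rw [Real.volume_Ioc, sub_zero, ← ENNReal.ofReal_ofNat 2,
              ← ENNReal.ofReal_mul (by norm_num)]
    have cover : Set.Ioo (0:ℝ) 1 ⊆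
        S n ∪ (Set.range (fun q : ℚ => (q:ℝ)) ∪ ⋃ j ∈ Finset.range m, Bad j) := by
      intro t ht
      by_cases hirr : Irrational t
      · by_cases hbad : ∃ j ∈ Finset.range m, t ∈ Bad j
        · rcases hbad with ⟨j, hj, htj⟩
          exact Or.inr (Or.inr (Set.mem_biUnion hj htj))
        · left
          refine ⟨ht, hirr, ?_⟩
          intro j hj1 hjm
          obtain ⟨i, rfl⟩ : ∃ i, j = i + 1 := ⟨j - 1, by omega⟩
          have hi : i ∈ Finset.range m := Finset.mem_range.2 (by omega)
          have hni : t ∉ Bad i := fun h => hbad ⟨i, hi, h⟩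
          obtain ⟨huirr, hu01⟩ := iterG_mem t hirr ht i
          have hule : G^[i] t ∉ Set.Ioc 0 ε := by
            intro h
            exact hni ⟨h, ht⟩
          have hεu : ε < G^[i] t := by
            by_contra hc
            exact hule ⟨hu01.1, le_of_not_gt hc⟩
          rw [theta_eq t hirr ht i]
          have h1 : (G^[i] t)⁻¹ < ε⁻¹ := inv_strictAnti₀ hεpos hεu
          have h2 : ε⁻¹ = (a:ℝ) := by rw [hεdef, inv_inv]
          rw [h2] at h1
          calc (G^[i] t)⁻¹ < (a:ℝ) := h1
            _ = 1 + (⌊Θ n * Real.log n⌋₊ : ℝ) := by rw [hadef]; push_cast; ring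
      · right; left
        rw [Irrational, not_not] at hirr
        exact hirr
    have hrange0 : volume (Set.range (fun q : ℚ => (q:ℝ))) = 0 :=
      (Set.countable_range _).measure_zero _
    have hbu : volume (⋃ j ∈ Finset.range m, Bad j) ≤ (m:ℝ≥0∞) * ENNReal.ofReal (2*ε) := by
      calc volume (⋃ j ∈ Finset.range m, Bad j)
          ≤ ∑ j ∈ Finset.range m, volume (Bad j) := measure_biUnion_finset_le _ _
        _ ≤ ∑ _j ∈ Finset.range m, ENNReal.ofReal (2*ε) :=
            Finset.sum_le_sum (fun j _ => hBadvol j)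
        _ = (m:ℝ≥0∞) * ENNReal.ofReal (2*ε) := by
            rw [Finset.sum_const, Finset.card_range, nsmul_eq_mul]
    have hmain : (1:ℝ≥0∞) ≤ volume (S n) + (m:ℝ≥0∞) * ENNReal.ofReal (2*ε) := by
      calc (1:ℝ≥0∞) = volume (Set.Ioo (0:ℝ) 1) := hvol01.symm
        _ ≤ volume (S n ∪ (Set.range (fun q : ℚ => (q:ℝ)) ∪ ⋃ j ∈ Finset.range m, Bad j)) :=
            measure_mono cover
        _ ≤ volume (S n) + volume (Set.range (fun q : ℚ => (q:ℝ)) ∪ ⋃ j ∈ Finset.range m, Bad j) :=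
            measure_union_le _ _
        _ ≤ volume (S n) + (volume (Set.range (fun q : ℚ => (q:ℝ))) +
              volume (⋃ j ∈ Finset.range m, Bad j)) :=
            add_le_add_right (measure_union_le _ _) _
        _ ≤ volume (S n) + (0 + (m:ℝ≥0∞) * ENNReal.ofReal (2*ε)) := by
            apply add_le_add_right
            exact add_le_add (le_of_eq hrange0) hbu
        _ = volume (S n) + (m:ℝ≥0∞) * ENNReal.ofReal (2*ε) := by rw [zero_add]
    have hSne : volume (S n) ≠ ⊤ := (lt_of_le_of_lt (hSfin n) (by norm_num)).ne
    have hCne : (m:ℝ≥0∞) * ENNReal.ofReal (2*ε) ≠ ⊤ :=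
      ENNReal.mul_ne_top (ENNReal.natCast_ne_top m) ENNReal.ofReal_ne_top
    have hreal : (1:ℝ) ≤ (volume (S n)).toReal + (m:ℝ) * (2*ε) := by
      have h := ENNReal.toReal_mono (ENNReal.add_ne_top.2 ⟨hSne, hCne⟩) hmain
      rw [ENNReal.toReal_add hSne hCne] at h
      simp only [ENNReal.toReal_one] at h
      have hC : ((m:ℝ≥0∞) * ENNReal.ofReal (2*ε)).toReal = (m:ℝ) * (2*ε) := by
        rw [ENNReal.toReal_mul, ENNReal.toReal_natCast,
          ENNReal.toReal_ofReal (by positivity)]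
      rw [hC] at h
      exact h
    have hm4 : (m:ℝ) ≤ 4 * Real.log n := Nat.floor_le (by positivity)
    have hbound : (m:ℝ) * (2*ε) ≤ 8 / Θ n := by
      have h2ε : 2*ε ≤ 2 * (Θ n * Real.log n)⁻¹ := by
        have := hεlt.le
        linarith
      have hstep : (m:ℝ) * (2*ε) ≤ (4 * Real.log n) * (2 * (Θ n * Real.log n)⁻¹) := by
        apply mul_le_mul hm4 h2ε (by positivity) (by positivity)
      have hid : (4 * Real.log n) * (2 * (Θ n * Real.log n)⁻¹) = 8 / Θ n := by
        field_simp
        ring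
      linarith [hstep, hid ▸ hstep]
    linarith
  have hlim : Tendsto (fun n : ℕ => 1 - 8 / Θ n) atTop (nhds 1) := by
    have h1 : Tendsto (fun n : ℕ => Θ n) atTop atTop :=
      hΘtop.comp tendsto_natCast_atTop_atTop
    have h2 : Tendsto (fun n : ℕ => (Θ (n:ℝ))⁻¹) atTop (nhds 0) :=
      h1.inv_tendsto_atTop
    have h3 : Tendsto (fun n : ℕ => 8 / Θ (n:ℝ)) atTop (nhds 0) := by
      have := h2.const_mul (8:ℝ)
      simpa [div_eq_mul_inv] using this
    have := tendsto_const_nhds (x := (1:ℝ)) (f := atTop (α := ℕ)) |>.sub h3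
    simpa using this
  apply tendsto_of_tendsto_of_tendsto_of_le_of_le' hlim tendsto_const_nhds
  · exact eventually_atTop.2 ⟨2, key⟩
  · exact Eventually.of_forall upper
end

section
/- Fix ε > 0 and let Θ : [1,∞) → [1,∞) be monotonically increasing with Θ(n) → ∞. For n ∈ ℕ define M̃_n = { t ∈ (0,1) \ ℚ : ϑ_j(t) < 1 + ⌊Θ(n)·j^{1+ε}⌋ for all j ∈ ℕ }, and M̃ = ⋃_{n≥1} M̃_n. Then M̃ has Lebesgue measure 1, i.e., |M̃| = 1. -/
open MeasureTheory Filter Set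
open scoped ENNReal

noncomputable def gmap (t : ℝ) : ℝ := Int.fract t⁻¹

noncomputable def gmeas : Measure ℝ :=
  (volume.restrict (Set.Ioo 0 1)).withDensity (fun t => ENNReal.ofReal (1+t)⁻¹)

lemma measurable_gmap : Measurable gmap := measurable_fract.comp measurable_inv

lemma gmeas_apply {s : Set ℝ} (hs : MeasurableSet s) :
    gmeas s = ∫⁻ t in s ∩ Set.Ioo 0 1, ENNReal.ofReal (1+t)⁻¹ := by
  rw [gmeas, withDensity_apply _ hs, Measure.restrict_restrict hs]

lemma gmeas_inter (s : Set ℝ) (hs : MeasurableSet s) :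
    gmeas s = gmeas (s ∩ Set.Ioo 0 1) := by
  rw [gmeas_apply hs, gmeas_apply (hs.inter measurableSet_Ioo), inter_assoc, inter_self]

lemma gmeas_ac : gmeas ≪ volume := by
  refine (withDensity_absolutelyContinuous _ _).trans ?_
  exact Measure.absolutelyContinuous_of_le Measure.restrict_le_self

lemma gmeas_le {s : Set ℝ} (hs : MeasurableSet s) : gmeas s ≤ volume (s ∩ Set.Ioo 0 1) := by
  rw [gmeas_apply hs]
  calc ∫⁻ t in s ∩ Set.Ioo 0 1, ENNReal.ofReal (1+t)⁻¹
      ≤ ∫⁻ _ in s ∩ Set.Ioo 0 1, 1 := by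
        refine lintegral_mono_ae ?_
        refine (ae_restrict_iff' (hs.inter measurableSet_Ioo)).2 (ae_of_all _ ?_)
        intro t ht
        have h1 : (1:ℝ) ≤ 1 + t := by linarith [ht.2.1.le]
        simpa using ENNReal.ofReal_le_one.2 (inv_le_one_of_one_le₀ h1)
    _ = volume (s ∩ Set.Ioo 0 1) := by simp

lemma vol_le_two_gmeas {s : Set ℝ} (hs : MeasurableSet s) (hsub : s ⊆ Set.Ioo 0 1) :
    volume s ≤ 2 * gmeas s := by
  rw [gmeas_apply hs, inter_eq_self_of_subset_left hsub, ← lintegral_const_mul _ (by fun_prop)]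
  calc volume s = ∫⁻ _ in s, 1 := by simp
    _ ≤ ∫⁻ t in s, 2 * ENNReal.ofReal (1+t)⁻¹ := by
        refine lintegral_mono_ae ((ae_restrict_iff' hs).2 (ae_of_all _ ?_))
        intro t ht
        have ht' := hsub ht
        have h2 : ((2:ℝ))⁻¹ ≤ (1+t)⁻¹ := by
          apply inv_anti₀ (by linarith [ht'.1]) (by linarith [ht'.2.le])
        have : (1:ℝ≥0∞) ≤ 2 * ENNReal.ofReal (1+t)⁻¹ := by
          calc (1:ℝ≥0∞) = 2 * ENNReal.ofReal (2:ℝ)⁻¹ := by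
                rw [ENNReal.ofReal_inv_of_pos (by norm_num), ENNReal.ofReal_ofNat,
                  ENNReal.mul_inv_cancel (by norm_num) (by norm_num)]
            _ ≤ 2 * ENNReal.ofReal (1+t)⁻¹ := by
                exact mul_le_mul_right (ENNReal.ofReal_le_ofReal h2) 2
        exact this

lemma integral_inv_one_add {a b : ℝ} (h0 : 0 ≤ a) (hab : a ≤ b) :
    ∫ t in a..b, (1+t)⁻¹ = Real.log (1+b) - Real.log (1+a) := by
  have : ∀ t : ℝ, (1+t)⁻¹ = (t+1)⁻¹ := fun t => by rw [add_comm]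
  simp_rw [this]
  rw [intervalIntegral.integral_comp_add_right (fun x => x⁻¹) 1,
    integral_inv (by
      intro h
      rw [Set.mem_uIcc] at h
      rcases h with ⟨h1,_⟩|⟨_,h2⟩ <;> linarith),
    Real.log_div (by linarith) (by linarith)]
  ring_nf

lemma gmeas_Ioo {a b : ℝ} (h0 : 0 ≤ a) (hab : a ≤ b) (hb : b ≤ 1) :
    gmeas (Set.Ioo a b) = ENNReal.ofReal (Real.log (1+b) - Real.log (1+a)) := by
  have hsub : Set.Ioo a b ⊆ Set.Ioo 0 1 := fun t ht => ⟨lt_of_le_of_lt h0 ht.1, lt_of_lt_of_le ht.2 hb⟩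
  rw [gmeas_apply measurableSet_Ioo, inter_eq_self_of_subset_left hsub]
  have hcont : ContinuousOn (fun t : ℝ => (1+t)⁻¹) (Set.Icc a b) := by
    apply ContinuousOn.inv₀ (by fun_prop)
    intro t ht; nlinarith [ht.1]
  have hint : IntegrableOn (fun t : ℝ => (1+t)⁻¹) (Set.Ioo a b) :=
    (hcont.integrableOn_Icc).mono_set Set.Ioo_subset_Icc_self
  rw [← ofReal_integral_eq_lintegral_ofReal hint ?_]
  · congr 1
    rw [← integral_inv_one_add h0 hab, intervalIntegral.integral_of_le hab,
      MeasureTheory.integral_Ioc_eq_integral_Ioo]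
  · refine (ae_restrict_iff' measurableSet_Ioo).2 (ae_of_all _ fun t ht => ?_)
    exact inv_nonneg.2 (by linarith [(hsub ht).1.le])

lemma gmeas_Icc {a b : ℝ} (h0 : 0 ≤ a) (hab : a ≤ b) (hb : b ≤ 1) :
    gmeas (Set.Icc a b) = ENNReal.ofReal (Real.log (1+b) - Real.log (1+a)) := by
  have h1 : gmeas {a} = 0 := gmeas_ac (Real.volume_singleton)
  have h2 : gmeas {b} = 0 := gmeas_ac (Real.volume_singleton)
  refine le_antisymm ?_ ?_
  · calc gmeas (Set.Icc a b) ≤ gmeas ({a} ∪ Set.Ioo a b ∪ {b}) := by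
          apply measure_mono
          intro t ht
          rcases eq_or_lt_of_le ht.1 with h|h
          · exact Or.inl (Or.inl h.symm)
          rcases eq_or_lt_of_le ht.2 with h'|h'
          · exact Or.inr h'
          · exact Or.inl (Or.inr ⟨h, h'⟩)
      _ ≤ gmeas ({a} ∪ Set.Ioo a b) + gmeas {b} := measure_union_le _ _
      _ ≤ gmeas {a} + gmeas (Set.Ioo a b) + gmeas {b} := by
          gcongr; exact measure_union_le _ _
      _ = ENNReal.ofReal (Real.log (1+b) - Real.log (1+a)) := by
          rw [h1, h2, gmeas_Ioo h0 hab hb]; simp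
  · rw [← gmeas_Ioo h0 hab hb]; exact measure_mono Set.Ioo_subset_Icc_self

lemma hasSum_tele (x : ℝ) (hx : 0 ≤ x) :
    HasSum (fun k : ℕ => Real.log (1 + ((k:ℝ)+1)⁻¹) - Real.log (1 + ((k:ℝ)+1+x)⁻¹))
      (Real.log (1+x)) := by
  set f : ℕ → ℝ := fun k => Real.log ((k:ℝ)+1+x) - Real.log ((k:ℝ)+1) with hf
  have hterm : ∀ k : ℕ, Real.log (1 + ((k:ℝ)+1)⁻¹) - Real.log (1 + ((k:ℝ)+1+x)⁻¹)
      = f k - f (k+1) := by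
    intro k
    have h1 : (0:ℝ) < (k:ℝ)+1 := by positivity
    have h2 : (0:ℝ) < (k:ℝ)+1+x := by positivity
    have e1 : 1 + ((k:ℝ)+1)⁻¹ = ((k:ℝ)+2)/((k:ℝ)+1) := by field_simp; ring
    have e2 : 1 + ((k:ℝ)+1+x)⁻¹ = ((k:ℝ)+2+x)/((k:ℝ)+1+x) := by field_simp; ring
    rw [e1, e2, Real.log_div (by positivity) (ne_of_gt h1),
      Real.log_div (by positivity) (ne_of_gt h2)]
    simp only [hf]
    push_cast
    ring
  have hnonneg : ∀ k : ℕ, 0 ≤ Real.log (1 + ((k:ℝ)+1)⁻¹) - Real.log (1 + ((k:ℝ)+1+x)⁻¹) := by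
    intro k
    have h1 : (0:ℝ) < (k:ℝ)+1 := by positivity
    have h2 : (0:ℝ) < (k:ℝ)+1+x := by positivity
    have : ((k:ℝ)+1+x)⁻¹ ≤ ((k:ℝ)+1)⁻¹ := inv_anti₀ h1 (by linarith)
    have hlog := Real.log_le_log (by positivity) (by linarith : 1 + ((k:ℝ)+1+x)⁻¹ ≤ 1 + ((k:ℝ)+1)⁻¹)
    linarith
  have hft : Tendsto f atTop (nhds 0) := by
    have heq : ∀ n : ℕ, f n = Real.log (1 + x/((n:ℝ)+1)) := by
      intro n
      have h1 : (0:ℝ) < (n:ℝ)+1 := by positivity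
      rw [hf]
      have : (1:ℝ) + x/((n:ℝ)+1) = ((n:ℝ)+1+x)/((n:ℝ)+1) := by field_simp
      rw [this, Real.log_div (by positivity) (ne_of_gt h1)]
    rw [show f = fun n : ℕ => Real.log (1 + x/((n:ℝ)+1)) from funext heq]
    have h2 : Tendsto (fun n : ℕ => 1 + x/((n:ℝ)+1)) atTop (nhds 1) := by
      have := Tendsto.const_div_atTop (g := fun n : ℕ => (n:ℝ)+1) (r := x)
        (tendsto_atTop_add_const_right atTop 1 tendsto_natCast_atTop_atTop)
      simpa using tendsto_const_nhds.add this
    have h3 := (Real.continuousAt_log (by norm_num : (1:ℝ) ≠ 0)).tendsto.comp h2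
    simpa [Function.comp_def] using h3
  rw [hasSum_iff_tendsto_nat_of_nonneg hnonneg]
  simp only [hterm]
  have hps : ∀ n, ∑ i ∈ Finset.range n, (f i - f (i+1)) = f 0 - f n :=
    fun n => Finset.sum_range_sub' f n
  simp_rw [hps]
  have hf0 : f 0 = Real.log (1+x) := by simp [hf]
  rw [← hf0]
  simpa using tendsto_const_nhds.sub hft

lemma gmap_preimage (x : ℝ) (h0 : 0 ≤ x) (h1 : x < 1) :
    gmap ⁻¹' (Set.Iic x) ∩ Set.Ioo 0 1 =
      (⋃ k : ℕ, Set.Icc (((k:ℝ)+1+x))⁻¹ (((k:ℝ)+1))⁻¹) ∩ Set.Ioo 0 1 := by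
  ext t
  simp only [Set.mem_inter_iff, Set.mem_preimage, Set.mem_Iic, Set.mem_iUnion, Set.mem_Icc,
    Set.mem_Ioo, and_congr_left_iff]
  intro ht
  have htpos : 0 < t := ht.1
  have hti : 1 < t⁻¹ := (one_lt_inv₀ htpos).2 ht.2
  constructor
  · intro hfr
    set m : ℤ := ⌊t⁻¹⌋ with hm
    have hm1 : 1 ≤ m := Int.le_floor.2 (by exact_mod_cast hti.le)
    have hfl : (m:ℝ) ≤ t⁻¹ := Int.floor_le _
    have hfr' : t⁻¹ - m ≤ x := by
      have : Int.fract t⁻¹ = t⁻¹ - m := rfl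
      rw [gmap] at hfr; linarith [hfr, this ▸ hfr]
    refine ⟨(m - 1).toNat, ?_, ?_⟩
    · have h9 : ((m - 1).toNat : ℤ) = m - 1 := Int.toNat_of_nonneg (by omega)
      have hcast : ((m - 1).toNat : ℝ) = (m:ℝ) - 1 := by
        rw [← Int.cast_natCast, h9]; push_cast; ring
      rw [hcast]
      have hle : t⁻¹ ≤ (m:ℝ) - 1 + 1 + x := by linarith
      calc ((m:ℝ) - 1 + 1 + x)⁻¹ ≤ (t⁻¹)⁻¹ := by
            apply inv_anti₀ (by positivity) hle
        _ = t := inv_inv t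
    · have h9 : ((m - 1).toNat : ℤ) = m - 1 := Int.toNat_of_nonneg (by omega)
      have hcast : ((m - 1).toNat : ℝ) = (m:ℝ) - 1 := by
        rw [← Int.cast_natCast, h9]; push_cast; ring
      rw [hcast]
      have hmpos : (0:ℝ) < (m:ℝ) - 1 + 1 := by push_cast; norm_num; exact_mod_cast hm1
      calc t = (t⁻¹)⁻¹ := (inv_inv t).symm
        _ ≤ ((m:ℝ) - 1 + 1)⁻¹ := by
            apply inv_anti₀ hmpos (by linarith)
  · rintro ⟨k, hk1, hk2⟩
    have hkpos : (0:ℝ) < (k:ℝ)+1 := by positivity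
    have hti1 : (k:ℝ)+1 ≤ t⁻¹ := by
      calc (k:ℝ)+1 = (((k:ℝ)+1)⁻¹)⁻¹ := (inv_inv _).symm
        _ ≤ t⁻¹ := inv_anti₀ htpos hk2
    have hti2 : t⁻¹ ≤ (k:ℝ)+1+x := by
      calc t⁻¹ ≤ ((((k:ℝ)+1+x))⁻¹)⁻¹ := inv_anti₀ (by positivity) hk1
        _ = (k:ℝ)+1+x := inv_inv _
    have hfloor : ⌊t⁻¹⌋ = (k:ℤ)+1 := by
      apply Int.floor_eq_iff.2
      constructor
      · exact_mod_cast hti1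
      · push_cast; linarith
    rw [gmap, Int.fract, hfloor]
    push_cast
    linarith


lemma tele_nonneg (x : ℝ) (hx : 0 ≤ x) (k : ℕ) :
    0 ≤ Real.log (1 + ((k:ℝ)+1)⁻¹) - Real.log (1 + ((k:ℝ)+1+x)⁻¹) := by
  have h1 : (0:ℝ) < (k:ℝ)+1 := by positivity
  have : ((k:ℝ)+1+x)⁻¹ ≤ ((k:ℝ)+1)⁻¹ := inv_anti₀ h1 (by linarith)
  have hlog := Real.log_le_log (by positivity)
    (by linarith : 1 + ((k:ℝ)+1+x)⁻¹ ≤ 1 + ((k:ℝ)+1)⁻¹)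
  linarith

lemma gmeas_Iic {x : ℝ} (h0 : 0 ≤ x) (h1 : x ≤ 1) :
    gmeas (Set.Iic x) = ENNReal.ofReal (Real.log (1+x)) := by
  rw [gmeas_inter _ measurableSet_Iic]
  refine le_antisymm ?_ ?_
  · calc gmeas (Set.Iic x ∩ Set.Ioo 0 1) ≤ gmeas (Set.Icc 0 x) := by
          apply measure_mono
          rintro t ⟨ha, hb, _⟩
          exact ⟨hb.le, ha⟩
      _ = ENNReal.ofReal (Real.log (1+x)) := by
          rw [gmeas_Icc le_rfl h0 h1]; simp
  · calc ENNReal.ofReal (Real.log (1+x)) = gmeas (Set.Ioo 0 x) := by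
          rw [gmeas_Ioo le_rfl h0 h1]; simp
      _ ≤ gmeas (Set.Iic x ∩ Set.Ioo 0 1) := by
          apply measure_mono
          rintro t ⟨ha, hb⟩
          exact ⟨hb.le, ha, lt_of_lt_of_le hb h1⟩

lemma gmeas_preimage_Iic {x : ℝ} (h0 : 0 ≤ x) (h1 : x < 1) :
    gmeas (gmap ⁻¹' Set.Iic x) = ENNReal.ofReal (Real.log (1+x)) := by
  rw [gmeas_inter _ (measurable_gmap measurableSet_Iic), gmap_preimage x h0 h1,
    ← gmeas_inter _ (MeasurableSet.iUnion fun k => measurableSet_Icc)]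
  have hdisj : Pairwise (Function.onFun Disjoint
      fun k : ℕ => Set.Icc (((k:ℝ)+1+x))⁻¹ (((k:ℝ)+1))⁻¹) := by
    have key : ∀ i j : ℕ, i < j →
        Disjoint (Set.Icc (((i:ℝ)+1+x))⁻¹ (((i:ℝ)+1))⁻¹)
          (Set.Icc (((j:ℝ)+1+x))⁻¹ (((j:ℝ)+1))⁻¹) := by
      intro i j hij
      rw [Set.disjoint_left]
      rintro t ⟨hi1, _⟩ ⟨_, hj2⟩
      have hji : (i:ℝ) + 1 ≤ (j:ℝ) := by exact_mod_cast hij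
      have hlt : ((j:ℝ)+1)⁻¹ < (((i:ℝ)+1+x))⁻¹ :=
        inv_strictAnti₀ (by positivity) (by linarith)
      linarith
    intro i j hij
    rcases lt_or_gt_of_ne hij with h|h
    · exact key i j h
    · exact (key j i h).symm
  rw [measure_iUnion hdisj fun k => measurableSet_Icc]
  have hterm : ∀ k : ℕ, gmeas (Set.Icc (((k:ℝ)+1+x))⁻¹ (((k:ℝ)+1))⁻¹)
      = ENNReal.ofReal (Real.log (1+((k:ℝ)+1)⁻¹) - Real.log (1+((k:ℝ)+1+x)⁻¹)) := by
    intro k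
    have hk1 : (0:ℝ) < (k:ℝ)+1 := by positivity
    rw [gmeas_Icc (by positivity) (inv_anti₀ hk1 (by linarith))
      (by rw [inv_le_one_iff₀]; right; linarith)]
  rw [tsum_congr hterm,
    ← ENNReal.ofReal_tsum_of_nonneg (tele_nonneg x h0) (hasSum_tele x h0).summable,
    (hasSum_tele x h0).tsum_eq]

lemma gmeas_univ : gmeas Set.univ = ENNReal.ofReal (Real.log 2) := by
  rw [gmeas_inter _ MeasurableSet.univ, Set.univ_inter, gmeas_Ioo le_rfl zero_le_one le_rfl]
  norm_num

instance : IsFiniteMeasure gmeas :=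
  ⟨by rw [gmeas_univ]; exact ENNReal.ofReal_lt_top⟩

lemma gmeas_map : gmeas.map gmap = gmeas := by
  refine Measure.ext_of_Iic _ _ (fun x => ?_)
  rw [Measure.map_apply measurable_gmap measurableSet_Iic]
  rcases lt_or_ge x 0 with h|h
  · have h2 : gmap ⁻¹' Set.Iic x = ∅ := by
      ext t; simp only [Set.mem_preimage, Set.mem_Iic, Set.mem_empty_iff_false, iff_false, not_le]
      exact lt_of_lt_of_le h (Int.fract_nonneg t⁻¹)
    have h3 : Set.Iic x ∩ Set.Ioo 0 1 = ∅ := by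
      ext t; simp only [Set.mem_inter_iff, Set.mem_Iic, Set.mem_Ioo, Set.mem_empty_iff_false,
        iff_false, not_and]
      intro ht h4; linarith
    rw [h2, gmeas_inter _ measurableSet_Iic, h3]
  rcases lt_or_ge x 1 with h1|h1
  · rw [gmeas_preimage_Iic h h1, gmeas_Iic h h1.le]
  · have h2 : gmap ⁻¹' Set.Iic x = Set.univ := by
      ext t; simp only [Set.mem_preimage, Set.mem_Iic, Set.mem_univ, iff_true]
      exact le_trans (Int.fract_lt_one t⁻¹).le h1
    rw [h2, gmeas_inter _ MeasurableSet.univ, gmeas_inter _ measurableSet_Iic]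
    congr 1
    rw [Set.univ_inter]
    ext t; simp only [Set.mem_inter_iff, Set.mem_Iic, Set.mem_Ioo, iff_and_self]
    rintro ⟨_, h4⟩
    exact le_trans h4.le h1

lemma gmap_preserving : MeasurePreserving gmap gmeas gmeas :=
  ⟨measurable_gmap, gmeas_map⟩

lemma fract_theta {t : ℝ} (ht : t ∈ Set.Ioo (0:ℝ) 1) (j : ℕ) :
    Int.fract (theta j t) = gmap^[j] t := by
  induction j with
  | zero => simp [theta, Int.fract_eq_self.2 ⟨ht.1.le, ht.2⟩]
  | succ j ih =>
      rw [Function.iterate_succ_apply', ← ih]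
      simp [theta, gmap, one_div]

lemma theta_succ {t : ℝ} (ht : t ∈ Set.Ioo (0:ℝ) 1) (j : ℕ) :
    theta (j+1) t = (gmap^[j] t)⁻¹ := by
  rw [show theta (j+1) t = (Int.fract (theta j t))⁻¹ from by simp [theta, one_div],
    fract_theta ht j]

lemma vol_bad {c : ℝ} (hc : 0 ≤ c) (j : ℕ) :
    volume (Set.Ioo (0:ℝ) 1 ∩ (gmap^[j])⁻¹' (Set.Iic c)) ≤ 2 * ENNReal.ofReal c := by
  have hmeas : MeasurableSet (Set.Ioo (0:ℝ) 1 ∩ (gmap^[j])⁻¹' (Set.Iic c)) :=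
    measurableSet_Ioo.inter ((measurable_gmap.iterate j) measurableSet_Iic)
  calc volume (Set.Ioo (0:ℝ) 1 ∩ (gmap^[j])⁻¹' (Set.Iic c))
      ≤ 2 * gmeas (Set.Ioo (0:ℝ) 1 ∩ (gmap^[j])⁻¹' (Set.Iic c)) :=
        vol_le_two_gmeas hmeas Set.inter_subset_left
    _ ≤ 2 * gmeas ((gmap^[j])⁻¹' (Set.Iic c)) :=
        mul_le_mul_right (measure_mono Set.inter_subset_right) 2
    _ = 2 * gmeas (Set.Iic c) := by
        rw [(gmap_preserving.iterate j).measure_preimage measurableSet_Iic.nullMeasurableSet]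
    _ ≤ 2 * volume (Set.Iic c ∩ Set.Ioo 0 1) :=
        mul_le_mul_right (gmeas_le measurableSet_Iic) 2
    _ ≤ 2 * ENNReal.ofReal c := by
        refine mul_le_mul_right ?_ 2
        calc volume (Set.Iic c ∩ Set.Ioo 0 1) ≤ volume (Set.Ioc 0 c) := by
              apply measure_mono
              rintro t ⟨h1, h2, _⟩
              exact ⟨h2, h1⟩
          _ = ENNReal.ofReal c := by rw [Real.volume_Ioc, sub_zero]

theorem stmt_18 (ε : ℝ) (hε : 0 < ε) (Θ : ℝ → ℝ)
    (hΘ1 : ∀ x : ℝ, 1 ≤ x → 1 ≤ Θ x)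
    (hΘmono : MonotoneOn Θ (Set.Ici (1:ℝ)))
    (hΘtop : Tendsto Θ atTop atTop) :
    volume (⋃ n : ℕ, ⋃ _ : 1 ≤ n,
      {t : ℝ | t ∈ Set.Ioo (0:ℝ) 1 ∧ Irrational t ∧
        ∀ j : ℕ, 1 ≤ j → theta j t < 1 + ⌊Θ n * (j : ℝ) ^ (1 + ε)⌋₊}) = 1 := by
  set U : Set ℝ := ⋃ n : ℕ, ⋃ _ : 1 ≤ n,
      {t : ℝ | t ∈ Set.Ioo (0:ℝ) 1 ∧ Irrational t ∧
        ∀ j : ℕ, 1 ≤ j → theta j t < 1 + ⌊Θ n * (j : ℝ) ^ (1 + ε)⌋₊} with hUdef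
  set B : ℕ → Set ℝ := fun j =>
    Set.Ioo (0:ℝ) 1 ∩ (gmap^[j])⁻¹' (Set.Iic ((((j:ℝ)+1) ^ (1+ε))⁻¹)) with hBdef
  have hsummable : Summable (fun j : ℕ => (((j:ℝ)+1) ^ (1+ε))⁻¹) := by
    have h := Real.summable_one_div_nat_rpow.2 (by linarith : 1 < 1+ε)
    have h2 := (summable_nat_add_iff 1).2 h
    refine h2.congr fun n => ?_
    push_cast
    rw [one_div]
  have hBsum : ∑' j, volume (B j) ≠ ⊤ := by
    have hb : ∀ j : ℕ, volume (B j) ≤ 2 * ENNReal.ofReal ((((j:ℝ)+1) ^ (1+ε))⁻¹) :=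
      fun j => vol_bad (by positivity) j
    have h1 : ∑' j, volume (B j) ≤ 2 * ∑' j : ℕ, ENNReal.ofReal ((((j:ℝ)+1)^(1+ε))⁻¹) := by
      rw [← ENNReal.tsum_mul_left]; exact ENNReal.tsum_le_tsum hb
    refine ne_top_of_le_ne_top ?_ h1
    rw [← ENNReal.ofReal_tsum_of_nonneg (fun n => by positivity) hsummable]
    exact ENNReal.mul_ne_top (by norm_num) ENNReal.ofReal_ne_top
  have hlimsup : volume (limsup B atTop) = 0 := measure_limsup_atTop_eq_zero hBsum
  have hsub : Set.Ioo (0:ℝ) 1 ⊆ U ∪ (Set.range ((↑) : ℚ → ℝ) ∪ limsup B atTop) := by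
    intro t ht
    by_cases hirr : Irrational t
    swap
    · exact Or.inr (Or.inl (Set.not_notMem.1 hirr))
    by_cases hU : t ∈ U
    · exact Or.inl hU
    refine Or.inr (Or.inr ?_)
    rw [limsup_eq_iInf_iSup_of_nat]
    simp only [Set.iInf_eq_iInter, Set.iSup_eq_iUnion, Set.mem_iInter, Set.mem_iUnion]
    intro J
    have hne : ((Finset.range (J+1)).image fun j => theta j t).Nonempty :=
      (Finset.nonempty_range_iff.2 (Nat.succ_ne_zero J)).image _
    set M := ((Finset.range (J+1)).image fun j => theta j t).max' hne with hM
    have htn : Tendsto (fun n : ℕ => Θ n) atTop atTop :=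
      hΘtop.comp tendsto_natCast_atTop_atTop
    obtain ⟨n, hn1, hnM⟩ : ∃ n : ℕ, 1 ≤ n ∧ M < Θ n := by
      obtain ⟨n, h1, h2⟩ := ((htn.eventually_gt_atTop M).and (eventually_ge_atTop 1)).exists
      exact ⟨n, h2, h1⟩
    have hΘn1 : 1 ≤ Θ n := hΘ1 _ (by exact_mod_cast hn1)
    have hfail : ¬ (t ∈ Set.Ioo (0:ℝ) 1 ∧ Irrational t ∧
        ∀ j : ℕ, 1 ≤ j → theta j t < 1 + ⌊Θ n * (j:ℝ)^(1+ε)⌋₊) := by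
      intro hmem
      exact hU (Set.mem_iUnion.2 ⟨n, Set.mem_iUnion.2 ⟨hn1, hmem⟩⟩)
    push_neg at hfail
    obtain ⟨j, hj1, hjth⟩ := hfail ht hirr
    have hjr : (1:ℝ) ≤ (j:ℝ) := by exact_mod_cast hj1
    have hrpow1 : (1:ℝ) ≤ (j:ℝ)^(1+ε) := Real.one_le_rpow hjr (by linarith)
    have hgt : Θ n * (j:ℝ)^(1+ε) < theta j t := by
      have := Nat.lt_floor_add_one (Θ n * (j:ℝ)^(1+ε))
      linarith
    have hgt2 : Θ n ≤ Θ n * (j:ℝ)^(1+ε) := le_mul_of_one_le_right (by linarith) hrpow1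
    have hjJ : J + 1 ≤ j := by
      by_contra hc
      push_neg at hc
      have hmem : theta j t ∈ (Finset.range (J+1)).image fun j => theta j t :=
        Finset.mem_image_of_mem _ (Finset.mem_range.2 hc)
      have : theta j t ≤ M := Finset.le_max' _ _ hmem
      linarith
    obtain ⟨m, rfl⟩ : ∃ m, j = m + 1 := ⟨j - 1, by omega⟩
    refine ⟨m, by omega, ht, ?_⟩
    have hy : gmap^[m] t = Int.fract (theta m t) := (fract_theta ht m).symm
    have hy0 : 0 ≤ gmap^[m] t := hy ▸ Int.fract_nonneg _
    have hth : theta (m+1) t = (gmap^[m] t)⁻¹ := theta_succ ht m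
    have hcast : ((m+1 : ℕ):ℝ) = (m:ℝ)+1 := by push_cast; ring
    have hpow_pos : (0:ℝ) < ((m:ℝ)+1)^(1+ε) := by positivity
    have hthgt : ((m:ℝ)+1)^(1+ε) < theta (m+1) t := by
      rw [← hcast]
      nlinarith [hgt, hgt2, hrpow1]
    have hypos : 0 < gmap^[m] t := by
      rcases eq_or_lt_of_le hy0 with h|h
      · exfalso
        rw [hth, ← h, inv_zero] at hthgt
        linarith
      · exact h
    have hyeq : gmap^[m] t = (theta (m+1) t)⁻¹ := by rw [hth, inv_inv]
    rw [Set.mem_preimage, Set.mem_Iic, hyeq]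
    exact inv_anti₀ hpow_pos hthgt.le
  have hUsub : U ⊆ Set.Ioo (0:ℝ) 1 := by
    rw [hUdef]
    refine Set.iUnion₂_subset fun n hn => ?_
    intro t htm
    exact htm.1
  refine le_antisymm ?_ ?_
  · calc volume U ≤ volume (Set.Ioo (0:ℝ) 1) := measure_mono hUsub
      _ = 1 := by rw [Real.volume_Ioo]; norm_num
  · calc (1:ℝ≥0∞) = volume (Set.Ioo (0:ℝ) 1) := by rw [Real.volume_Ioo]; norm_num
      _ ≤ volume (U ∪ (Set.range ((↑) : ℚ → ℝ) ∪ limsup B atTop)) := measure_mono hsub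
      _ ≤ volume U + volume (Set.range ((↑) : ℚ → ℝ) ∪ limsup B atTop) := measure_union_le _ _
      _ ≤ volume U + (volume (Set.range ((↑) : ℚ → ℝ)) + volume (limsup B atTop)) := by
          gcongr
          exact measure_union_le _ _
      _ = volume U := by
          rw [hlimsup, (Set.countable_range _).measure_zero]
          simp
end
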